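/- arXiv:1712.02130 — 2 statements merged into one kernel-verified Lean document; each statement's English description precedes it below -/
import Mathlib

section
/- Let N_{αβμν} (α,β,μ,ν∈{0,1,2}) be real coefficients satisfying the symmetry condition and the null condition. There exists a constant C>0, depending only on the coefficients, such that for every multi-index a, every sufficiently smooth (C^{|a|+3}) real-valued function u defined near a point (t,x)∈ℝ^{1+2} with t≥0 and |x|≥1, the quantity F₁(u) := Σ N_{αβμν} ∂_α Γ^a u · ∂_β Γ^a u · ∂_μ∂_ν u satisfies |F₁(u)(t,x)| ≤ C [ Σ_{i=1,2} |((ω_i∂_t+∂_i)Γ^a u)| · |∂Γ^a u| · |∂²u| + (1/|x|)·|∂_tΓ^a u|²·(|∂Γu| + |∂u|) ](t,x). -/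
noncomputable section

open MeasureTheory Real Set

/-- Partial derivative in coordinate direction `i` on space-time `ℝ³`
(coordinate `0` is time, coordinates `1, 2` are space). -/
def pd (i : Fin 3) (u : (Fin 3 → ℝ) → ℝ) : (Fin 3 → ℝ) → ℝ :=
  fun X => fderiv ℝ u X (Pi.single i 1)

/-- The d'Alembertian `□ = ∂_t² - ∂₁² - ∂₂²`. -/
def box (u : (Fin 3 → ℝ) → ℝ) : (Fin 3 → ℝ) → ℝ :=
  fun X => pd 0 (pd 0 u) X - pd 1 (pd 1 u) X - pd 2 (pd 2 u) X

/-- The seven Klainerman vector fields `Γ = (∂_t, ∂₁, ∂₂, Ω, L₁, L₂, S̃)`. -/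
def Gamma (i : Fin 7) (u : (Fin 3 → ℝ) → ℝ) : (Fin 3 → ℝ) → ℝ :=
  if i = 0 then pd 0 u
  else if i = 1 then pd 1 u
  else if i = 2 then pd 2 u
  else if i = 3 then fun X => -(X 2) * pd 1 u X + X 1 * pd 2 u X
  else if i = 4 then fun X => X 0 * pd 1 u X + X 1 * pd 0 u X
  else if i = 5 then fun X => X 0 * pd 2 u X + X 2 * pd 0 u X
  else fun X => X 0 * pd 0 u X + X 1 * pd 1 u X + X 2 * pd 2 u X - 2 * u X

/-- `Γ^a` for a multi-index `a = (a₁,…,a₇) ∈ ℕ⁷`. -/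
def GammaPow (a : Fin 7 → ℕ) (u : (Fin 3 → ℝ) → ℝ) : (Fin 3 → ℝ) → ℝ :=
  (Gamma 0)^[a 0] <| (Gamma 1)^[a 1] <| (Gamma 2)^[a 2] <| (Gamma 3)^[a 3] <|
    (Gamma 4)^[a 4] <| (Gamma 5)^[a 5] <| (Gamma 6)^[a 6] u

/-- The point `(t, x) ∈ ℝ^{1+2}`. -/
def pt (t : ℝ) (x : ℝ × ℝ) : Fin 3 → ℝ := ![t, x.1, x.2]

/-- `|∂v|²` at a point. -/
def pdSq (v : (Fin 3 → ℝ) → ℝ) (X : Fin 3 → ℝ) : ℝ :=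
  (pd 0 v X) ^ 2 + (pd 1 v X) ^ 2 + (pd 2 v X) ^ 2

/-- The spatial radius `r = |x|` of a space-time point. -/
def rad (X : Fin 3 → ℝ) : ℝ := Real.sqrt ((X 1) ^ 2 + (X 2) ^ 2)

/-- Multi-indices `a ∈ ℕ⁷` with `|a| ≤ k`. -/
def multiIndex7 (k : ℕ) : Finset (Fin 7 → ℕ) :=
  (Fintype.piFinset fun _ => Finset.range (k + 1)).filter fun a => ∑ i, a i ≤ k

/-- The generalized energy `E_k(u(t)) = (1/2) ∑_{|a| ≤ k-1} ∫ |∂Γ^a u|² dx`. -/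
def energy (k : ℕ) (u : (Fin 3 → ℝ) → ℝ) (t : ℝ) : ℝ :=
  (1 / 2) * ∑ a ∈ multiIndex7 (k - 1), ∫ x : ℝ × ℝ, pdSq (GammaPow a u) (pt t x)

/-- Partial derivatives on the plane `ℝ²`. -/
def pdx (i : Fin 2) (f : ℝ × ℝ → ℝ) : ℝ × ℝ → ℝ :=
  fun x => fderiv ℝ f x (if i = 0 then (1, 0) else (0, 1))

/-- The fields `Λ = (∂₁, ∂₂, r∂_r, Ω)` on `ℝ²`. -/
def Lam (i : Fin 4) (f : ℝ × ℝ → ℝ) : ℝ × ℝ → ℝ :=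
  if i = 0 then pdx 0 f
  else if i = 1 then pdx 1 f
  else if i = 2 then fun x => x.1 * pdx 0 f x + x.2 * pdx 1 f x
  else fun x => -x.2 * pdx 0 f x + x.1 * pdx 1 f x

/-- `Λ^a` for a multi-index `a ∈ ℕ⁴`. -/
def LamPow (a : Fin 4 → ℕ) (f : ℝ × ℝ → ℝ) : ℝ × ℝ → ℝ :=
  (Lam 0)^[a 0] <| (Lam 1)^[a 1] <| (Lam 2)^[a 2] <| (Lam 3)^[a 3] f

/-- Multi-indices `a ∈ ℕ⁴` with `|a| ≤ k`. -/
def multiIndex4 (k : ℕ) : Finset (Fin 4 → ℕ) :=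
  (Fintype.piFinset fun _ => Finset.range (k + 1)).filter fun a => ∑ i, a i ≤ k

/-- The `L²(ℝ²)` norm. -/
def L2 (f : ℝ × ℝ → ℝ) : ℝ := (eLpNorm f 2 volume).toReal

/-- `|∇f|` for a function on `ℝ²`. -/
def gradAbs (f : ℝ × ℝ → ℝ) : ℝ × ℝ → ℝ :=
  fun x => Real.sqrt ((pdx 0 f x) ^ 2 + (pdx 1 f x) ^ 2)

/-- Membership `(f, g) ∈ H^k_Λ`. -/
def MemHLam (k : ℕ) (f g : ℝ × ℝ → ℝ) : Prop :=
  ∀ a ∈ multiIndex4 (k - 1),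
    MemLp (LamPow a f) 2 (volume : Measure (ℝ × ℝ)) ∧
    MemLp (gradAbs (LamPow a f)) 2 (volume : Measure (ℝ × ℝ)) ∧
    MemLp (LamPow a g) 2 (volume : Measure (ℝ × ℝ))

/-- The norm `‖(f, g)‖_{H^k_Λ} = ∑_{|a| ≤ k-1} (‖∇Λ^a f‖_{L²} + ‖Λ^a g‖_{L²})`. -/
def HLamNorm (k : ℕ) (f g : ℝ × ℝ → ℝ) : ℝ :=
  ∑ a ∈ multiIndex4 (k - 1), (L2 (gradAbs (LamPow a f)) + L2 (LamPow a g))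

/-- The Japanese bracket `⟨t⟩ = √(1 + t²)`. -/
def jb (t : ℝ) : ℝ := Real.sqrt (1 + t ^ 2)

/-- The null condition for the coefficients `N_{αβμν}`. -/
def NullCond (N : Fin 3 → Fin 3 → Fin 3 → Fin 3 → ℝ) : Prop :=
  ∀ X : Fin 3 → ℝ, (X 0) ^ 2 = (X 1) ^ 2 + (X 2) ^ 2 →
    ∑ α : Fin 3, ∑ β : Fin 3, ∑ μ : Fin 3, ∑ ν : Fin 3,
      N α β μ ν * X α * X β * X μ * X ν = 0

/-- The symmetry condition `N_{αβμν} = N_{βαμν} = N_{αβνμ}`. -/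
def SymCond (N : Fin 3 → Fin 3 → Fin 3 → Fin 3 → ℝ) : Prop :=
  ∀ α β μ ν, N α β μ ν = N β α μ ν ∧ N α β μ ν = N α β ν μ

/-- The quadratic nonlinearity `N(u, v) = ∑ N_{αβμν} ∂_α∂_β u ∂_μ∂_ν v`. -/
def NL (N : Fin 3 → Fin 3 → Fin 3 → Fin 3 → ℝ) (u v : (Fin 3 → ℝ) → ℝ) :
    (Fin 3 → ℝ) → ℝ :=
  fun X => ∑ α : Fin 3, ∑ β : Fin 3, ∑ μ : Fin 3, ∑ ν : Fin 3,
    N α β μ ν * pd α (pd β u) X * pd μ (pd ν v) X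

/-- A global classical solution of `□u = N(u, u)` on `[0, ∞) × ℝ²` with data `(φ, ψ)`. -/
def IsGlobalSolution (N : Fin 3 → Fin 3 → Fin 3 → Fin 3 → ℝ)
    (φ ψ : ℝ × ℝ → ℝ) (u : (Fin 3 → ℝ) → ℝ) : Prop :=
  ContDiff ℝ 2 u ∧
  (∀ X : Fin 3 → ℝ, 0 ≤ X 0 → box u X = NL N u u X) ∧
  (∀ x : ℝ × ℝ, u (pt 0 x) = φ x ∧ pd 0 u (pt 0 x) = ψ x)

/-- The quadratic nonlinearity `∑ N_{μδ} ∂_μ v ∂_δ v` of the quasilinear equation. -/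
def QNL (N : Fin 3 → Fin 3 → ℝ) (v : (Fin 3 → ℝ) → ℝ) : (Fin 3 → ℝ) → ℝ :=
  fun X => ∑ μ : Fin 3, ∑ δ : Fin 3, N μ δ * pd μ v X * pd δ v X

/-- The null condition for the coefficients `N_{μδ}`. -/
def NullCond2 (N : Fin 3 → Fin 3 → ℝ) : Prop :=
  ∀ X : Fin 3 → ℝ, (X 0) ^ 2 = (X 1) ^ 2 + (X 2) ^ 2 →
    ∑ μ : Fin 3, ∑ δ : Fin 3, N μ δ * X μ * X δ = 0

/-- A global classical solution of `□v = ∑ A_l ∂_l (∑ N_{μδ} ∂_μ v ∂_δ v)` with data `(v₀, v₁)`. -/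
def IsGlobalQSolution (A : Fin 3 → ℝ) (N : Fin 3 → Fin 3 → ℝ)
    (v₀ v₁ : ℝ × ℝ → ℝ) (v : (Fin 3 → ℝ) → ℝ) : Prop :=
  ContDiff ℝ 2 v ∧
  (∀ X : Fin 3 → ℝ, 0 ≤ X 0 → box v X = ∑ l : Fin 3, A l * pd l (QNL N v) X) ∧
  (∀ x : ℝ × ℝ, v (pt 0 x) = v₀ x ∧ pd 0 v (pt 0 x) = v₁ x)


/-- `|∂v|` at a point. -/
def absPd (v : (Fin 3 → ℝ) → ℝ) (X : Fin 3 → ℝ) : ℝ := Real.sqrt (pdSq v X)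

/-- `|∂Γu|` at a point: the sum over the seven fields `Γ'` of `|∂Γ'u|`. -/
def absPdGam (u : (Fin 3 → ℝ) → ℝ) (X : Fin 3 → ℝ) : ℝ :=
  ∑ i : Fin 7, absPd (Gamma i u) X

/-- `|∂²u|` at a point: the Euclidean norm of all second-order space-time derivatives. -/
def absPd2 (u : (Fin 3 → ℝ) → ℝ) (X : Fin 3 → ℝ) : ℝ :=
  Real.sqrt (∑ i : Fin 3, ∑ j : Fin 3, (pd i (pd j u) X) ^ 2)

/-! ### Auxiliary lemmas for `F1_pointwise_bound` -/

section Aux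

variable {u f gg : (Fin 3 → ℝ) → ℝ} {X : Fin 3 → ℝ}

private lemma pd_diff (hu : ContDiffAt ℝ 2 u X) (ν : Fin 3) :
    DifferentiableAt ℝ (pd ν u) X := by
  have hd : DifferentiableAt ℝ (fderiv ℝ u) X :=
    (hu.fderiv_right (m := 1) (by norm_num)).differentiableAt one_ne_zero
  exact hd.clm_apply (differentiableAt_const _)

private lemma pd_eq_fderiv2 (hu : ContDiffAt ℝ 2 u X) (μ ν : Fin 3) :
    pd μ (pd ν u) X = fderiv ℝ (fderiv ℝ u) X (Pi.single μ 1) (Pi.single ν 1) := by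
  have hd : DifferentiableAt ℝ (fderiv ℝ u) X :=
    (hu.fderiv_right (m := 1) (by norm_num)).differentiableAt one_ne_zero
  show fderiv ℝ (fun Y => fderiv ℝ u Y (Pi.single ν 1)) X (Pi.single μ 1) = _
  rw [fderiv_clm_apply hd (differentiableAt_const _)]
  simp

private lemma pd_comm (hu : ContDiffAt ℝ 2 u X) (μ ν : Fin 3) :
    pd μ (pd ν u) X = pd ν (pd μ u) X := by
  rw [pd_eq_fderiv2 hu, pd_eq_fderiv2 hu]
  exact (hu.isSymmSndFDerivAt (by norm_num)).eq _ _

private lemma pd_add (hf : DifferentiableAt ℝ f X) (hg : DifferentiableAt ℝ gg X) (ν : Fin 3) :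
    pd ν (fun Y => f Y + gg Y) X = pd ν f X + pd ν gg X := by
  show fderiv ℝ _ X _ = _
  rw [fderiv_fun_add hf hg]; simp [pd]

private lemma pd_sub (hf : DifferentiableAt ℝ f X) (hg : DifferentiableAt ℝ gg X) (ν : Fin 3) :
    pd ν (fun Y => f Y - gg Y) X = pd ν f X - pd ν gg X := by
  show fderiv ℝ _ X _ = _
  rw [fderiv_fun_sub hf hg]; simp [pd]

private lemma pd_neg (hf : DifferentiableAt ℝ f X) (ν : Fin 3) :
    pd ν (fun Y => -(f Y)) X = -(pd ν f X) := by
  show fderiv ℝ _ X _ = _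
  rw [fderiv_fun_neg]; simp [pd]

private lemma pd_const_mul (hf : DifferentiableAt ℝ f X) (c : ℝ) (ν : Fin 3) :
    pd ν (fun Y => c * f Y) X = c * pd ν f X := by
  show fderiv ℝ _ X _ = _
  rw [fderiv_const_mul hf]; simp [pd]

private lemma pd_coord_mul (hf : DifferentiableAt ℝ f X) (i ν : Fin 3) :
    pd ν (fun Y => Y i * f Y) X
      = (Pi.single ν 1 : Fin 3 → ℝ) i * f X + X i * pd ν f X := by
  have hc : HasFDerivAt (fun Y : Fin 3 → ℝ => Y i)
      (ContinuousLinearMap.proj (R := ℝ) (φ := fun _ : Fin 3 => ℝ) i) X :=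
    hasFDerivAt_apply i X
  show fderiv ℝ _ X _ = _
  rw [(hc.fun_mul hf.hasFDerivAt).fderiv]
  simp [pd]
  ring

private lemma coord_diff (i : Fin 3) : DifferentiableAt ℝ (fun Y : Fin 3 → ℝ => Y i) X :=
  (hasFDerivAt_apply i X).differentiableAt

private lemma absPd_nonneg (v : (Fin 3 → ℝ) → ℝ) (X : Fin 3 → ℝ) : 0 ≤ absPd v X :=
  Real.sqrt_nonneg _

private lemma absPdGam_nonneg (u : (Fin 3 → ℝ) → ℝ) (X : Fin 3 → ℝ) : 0 ≤ absPdGam u X :=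
  Finset.sum_nonneg fun _ _ => absPd_nonneg _ _

private lemma absPd2_nonneg (u : (Fin 3 → ℝ) → ℝ) (X : Fin 3 → ℝ) : 0 ≤ absPd2 u X :=
  Real.sqrt_nonneg _

private lemma abs_pd_le (v : (Fin 3 → ℝ) → ℝ) (X : Fin 3 → ℝ) (ν : Fin 3) :
    |pd ν v X| ≤ absPd v X := by
  rw [← Real.sqrt_sq_eq_abs]
  apply Real.sqrt_le_sqrt
  unfold pdSq
  have hcase : pd ν v X = pd 0 v X ∨ pd ν v X = pd 1 v X ∨ pd ν v X = pd 2 v X := by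
    fin_cases ν
    exacts [Or.inl rfl, Or.inr (Or.inl rfl), Or.inr (Or.inr rfl)]
  rcases hcase with h | h | h <;> rw [h] <;>
    nlinarith [sq_nonneg (pd 0 v X), sq_nonneg (pd 1 v X), sq_nonneg (pd 2 v X)]

private lemma abs_pd2_le (u : (Fin 3 → ℝ) → ℝ) (X : Fin 3 → ℝ) (μ ν : Fin 3) :
    |pd μ (pd ν u) X| ≤ absPd2 u X := by
  rw [← Real.sqrt_sq_eq_abs]
  apply Real.sqrt_le_sqrt
  have h1 : (pd μ (pd ν u) X) ^ 2 ≤ ∑ j : Fin 3, (pd μ (pd j u) X) ^ 2 :=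
    Finset.single_le_sum (f := fun j => (pd μ (pd j u) X) ^ 2)
      (fun j _ => sq_nonneg _) (Finset.mem_univ ν)
  exact h1.trans (Finset.single_le_sum (f := fun i => ∑ j : Fin 3, (pd i (pd j u) X) ^ 2)
    (fun i _ => Finset.sum_nonneg fun j _ => sq_nonneg _) (Finset.mem_univ μ))

private lemma bound_gamma3 (hu : ContDiffAt ℝ 2 u X) (ν : Fin 3) :
    |_root_.Gamma 3 (pd ν u) X| ≤ absPd (_root_.Gamma 3 u) X + absPd u X := by
  have hd1 := pd_diff hu 1
  have hd2 := pd_diff hu 2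
  have e : _root_.Gamma 3 u = fun Y => -(Y 2 * pd 1 u Y) + Y 1 * pd 2 u Y := by
    funext Y; simp [_root_.Gamma]
  have epd : pd ν (_root_.Gamma 3 u) X
      = -((Pi.single ν 1 : Fin 3 → ℝ) 2 * pd 1 u X + X 2 * pd ν (pd 1 u) X)
        + ((Pi.single ν 1 : Fin 3 → ℝ) 1 * pd 2 u X + X 1 * pd ν (pd 2 u) X) := by
    rw [e, pd_add (((coord_diff 2).fun_mul hd1).fun_neg) ((coord_diff 1).fun_mul hd2),
      pd_neg ((coord_diff 2).fun_mul hd1), pd_coord_mul hd1 2 ν, pd_coord_mul hd2 1 ν]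
  have eg : _root_.Gamma 3 (pd ν u) X = pd ν (_root_.Gamma 3 u) X
      + (Pi.single ν 1 : Fin 3 → ℝ) 2 * pd 1 u X
      - (Pi.single ν 1 : Fin 3 → ℝ) 1 * pd 2 u X := by
    have eL : _root_.Gamma 3 (pd ν u) X = -(X 2) * pd 1 (pd ν u) X + X 1 * pd 2 (pd ν u) X := by
      simp [_root_.Gamma]
    rw [eL, epd, pd_comm hu ν 1, pd_comm hu ν 2]; ring
  rw [eg]
  fin_cases ν <;> simp [Pi.single_apply, Fin.ext_iff] <;>
    first
      | exact (abs_pd_le _ _ _).trans (le_add_of_nonneg_right (absPd_nonneg _ _))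
      | exact (abs_sub _ _).trans (add_le_add (abs_pd_le _ _ _) (abs_pd_le _ _ _))
      | exact (abs_add_le _ _).trans (add_le_add (abs_pd_le _ _ _) (abs_pd_le _ _ _))

private lemma bound_gamma4 (hu : ContDiffAt ℝ 2 u X) (ν : Fin 3) :
    |_root_.Gamma 4 (pd ν u) X| ≤ absPd (_root_.Gamma 4 u) X + absPd u X := by
  have hd0 := pd_diff hu 0
  have hd1 := pd_diff hu 1
  have e : _root_.Gamma 4 u = fun Y => Y 0 * pd 1 u Y + Y 1 * pd 0 u Y := by
    funext Y; simp [_root_.Gamma]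
  have epd : pd ν (_root_.Gamma 4 u) X
      = ((Pi.single ν 1 : Fin 3 → ℝ) 0 * pd 1 u X + X 0 * pd ν (pd 1 u) X)
        + ((Pi.single ν 1 : Fin 3 → ℝ) 1 * pd 0 u X + X 1 * pd ν (pd 0 u) X) := by
    rw [e, pd_add ((coord_diff 0).fun_mul hd1) ((coord_diff 1).fun_mul hd0),
      pd_coord_mul hd1 0 ν, pd_coord_mul hd0 1 ν]
  have eg : _root_.Gamma 4 (pd ν u) X = pd ν (_root_.Gamma 4 u) X
      - (Pi.single ν 1 : Fin 3 → ℝ) 0 * pd 1 u X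
      - (Pi.single ν 1 : Fin 3 → ℝ) 1 * pd 0 u X := by
    have eL : _root_.Gamma 4 (pd ν u) X = X 0 * pd 1 (pd ν u) X + X 1 * pd 0 (pd ν u) X := by
      simp [_root_.Gamma]
    rw [eL, epd, pd_comm hu ν 1, pd_comm hu ν 0]; ring
  rw [eg]
  fin_cases ν <;> simp [Pi.single_apply, Fin.ext_iff] <;>
    first
      | exact (abs_pd_le _ _ _).trans (le_add_of_nonneg_right (absPd_nonneg _ _))
      | exact (abs_sub _ _).trans (add_le_add (abs_pd_le _ _ _) (abs_pd_le _ _ _))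
      | exact (abs_add_le _ _).trans (add_le_add (abs_pd_le _ _ _) (abs_pd_le _ _ _))

private lemma bound_gamma5 (hu : ContDiffAt ℝ 2 u X) (ν : Fin 3) :
    |_root_.Gamma 5 (pd ν u) X| ≤ absPd (_root_.Gamma 5 u) X + absPd u X := by
  have hd0 := pd_diff hu 0
  have hd2 := pd_diff hu 2
  have e : _root_.Gamma 5 u = fun Y => Y 0 * pd 2 u Y + Y 2 * pd 0 u Y := by
    funext Y; simp [_root_.Gamma]
  have epd : pd ν (_root_.Gamma 5 u) X
      = ((Pi.single ν 1 : Fin 3 → ℝ) 0 * pd 2 u X + X 0 * pd ν (pd 2 u) X)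
        + ((Pi.single ν 1 : Fin 3 → ℝ) 2 * pd 0 u X + X 2 * pd ν (pd 0 u) X) := by
    rw [e, pd_add ((coord_diff 0).fun_mul hd2) ((coord_diff 2).fun_mul hd0),
      pd_coord_mul hd2 0 ν, pd_coord_mul hd0 2 ν]
  have eg : _root_.Gamma 5 (pd ν u) X = pd ν (_root_.Gamma 5 u) X
      - (Pi.single ν 1 : Fin 3 → ℝ) 0 * pd 2 u X
      - (Pi.single ν 1 : Fin 3 → ℝ) 2 * pd 0 u X := by
    have eL : _root_.Gamma 5 (pd ν u) X = X 0 * pd 2 (pd ν u) X + X 2 * pd 0 (pd ν u) X := by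
      simp [_root_.Gamma]
    rw [eL, epd, pd_comm hu ν 2, pd_comm hu ν 0]; ring
  rw [eg]
  fin_cases ν <;> simp [Pi.single_apply, Fin.ext_iff] <;>
    first
      | exact (abs_pd_le _ _ _).trans (le_add_of_nonneg_right (absPd_nonneg _ _))
      | exact (abs_sub _ _).trans (add_le_add (abs_pd_le _ _ _) (abs_pd_le _ _ _))
      | exact (abs_add_le _ _).trans (add_le_add (abs_pd_le _ _ _) (abs_pd_le _ _ _))

private lemma bound_gamma6 (hu : ContDiffAt ℝ 2 u X) (ν : Fin 3) :
    |_root_.Gamma 6 (pd ν u) X| ≤ absPd (_root_.Gamma 6 u) X + absPd u X := by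
  have hd0 := pd_diff hu 0
  have hd1 := pd_diff hu 1
  have hd2 := pd_diff hu 2
  have hdu : DifferentiableAt ℝ u X := hu.differentiableAt two_ne_zero
  have e : _root_.Gamma 6 u
      = fun Y => Y 0 * pd 0 u Y + Y 1 * pd 1 u Y + Y 2 * pd 2 u Y - 2 * u Y := by
    funext Y; simp [_root_.Gamma]
  have epd : pd ν (_root_.Gamma 6 u) X
      = ((Pi.single ν 1 : Fin 3 → ℝ) 0 * pd 0 u X + X 0 * pd ν (pd 0 u) X)
        + ((Pi.single ν 1 : Fin 3 → ℝ) 1 * pd 1 u X + X 1 * pd ν (pd 1 u) X)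
        + ((Pi.single ν 1 : Fin 3 → ℝ) 2 * pd 2 u X + X 2 * pd ν (pd 2 u) X)
        - 2 * pd ν u X := by
    rw [e, pd_sub ((((coord_diff 0).fun_mul hd0).fun_add ((coord_diff 1).fun_mul hd1)).fun_add
        ((coord_diff 2).fun_mul hd2)) (hdu.const_mul 2),
      pd_add (((coord_diff 0).fun_mul hd0).fun_add ((coord_diff 1).fun_mul hd1)) ((coord_diff 2).fun_mul hd2),
      pd_add ((coord_diff 0).fun_mul hd0) ((coord_diff 1).fun_mul hd1),
      pd_coord_mul hd0 0 ν, pd_coord_mul hd1 1 ν, pd_coord_mul hd2 2 ν,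
      pd_const_mul hdu 2 ν]
  have eg : _root_.Gamma 6 (pd ν u) X = pd ν (_root_.Gamma 6 u) X
      - (Pi.single ν 1 : Fin 3 → ℝ) 0 * pd 0 u X
      - (Pi.single ν 1 : Fin 3 → ℝ) 1 * pd 1 u X
      - (Pi.single ν 1 : Fin 3 → ℝ) 2 * pd 2 u X := by
    have eL : _root_.Gamma 6 (pd ν u) X = X 0 * pd 0 (pd ν u) X + X 1 * pd 1 (pd ν u) X
        + X 2 * pd 2 (pd ν u) X - 2 * pd ν u X := by
      simp [_root_.Gamma]
    rw [eL, epd, pd_comm hu ν 0, pd_comm hu ν 1, pd_comm hu ν 2]; ring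
  rw [eg]
  fin_cases ν <;> simp [Pi.single_apply, Fin.ext_iff] <;>
    first
      | exact (abs_pd_le _ _ _).trans (le_add_of_nonneg_right (absPd_nonneg _ _))
      | exact (abs_sub _ _).trans (add_le_add (abs_pd_le _ _ _) (abs_pd_le _ _ _))
      | exact (abs_add_le _ _).trans (add_le_add (abs_pd_le _ _ _) (abs_pd_le _ _ _))

private lemma alg_good {t r a b p0 pa pb : ℝ} (ht : 0 ≤ t) (hr : 1 ≤ r)
    (hr2 : r ^ 2 = a ^ 2 + b ^ 2) :
    |a / r * p0 + pa| ≤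
      1 / r * (|t * p0 + a * pa + b * pb| + |t * pa + a * p0| + |t * pb + b * p0| +
        |b * pa - a * pb|) := by
  have hr0 : (0 : ℝ) < r := lt_of_lt_of_le one_pos hr
  have htr : (0 : ℝ) < t + r := by linarith
  have ha : |a| ≤ r := by nlinarith [sq_abs a, abs_nonneg a, sq_nonneg b]
  have hb : |b| ≤ r := by nlinarith [sq_abs b, abs_nonneg b, sq_nonneg a]
  set S := t * p0 + a * pa + b * pb with hS
  set L1 := t * pa + a * p0 with hL1
  set L2 := t * pb + b * p0 with hL2
  set O := b * pa - a * pb with hO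
  have key : r * (t + r) * (a * p0 + r * pa)
      = a * r * S + a * (a * L1 + b * L2) + b * (t + r) * O := by
    rw [hS, hL1, hL2, hO]
    linear_combination (a * p0 + (t + r) * pa) * hr2
  have e1 : |a * r * S| ≤ r * (t + r) * |S| := by
    rw [abs_mul, abs_mul, abs_of_pos hr0]
    have h1 : |a| * r ≤ r * (t + r) := by
      nlinarith [mul_le_mul_of_nonneg_right ha hr0.le, mul_nonneg hr0.le ht]
    exact mul_le_mul_of_nonneg_right h1 (abs_nonneg S)
  have e2 : |a * (a * L1 + b * L2)| ≤ r * (t + r) * |L1| + r * (t + r) * |L2| := by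
    rw [abs_mul]
    have h := abs_add_le (a * L1) (b * L2)
    rw [abs_mul, abs_mul] at h
    have h2 := mul_le_mul_of_nonneg_left h (abs_nonneg a)
    have q1 : |a| * |a| * |L1| ≤ r * r * |L1| :=
      mul_le_mul_of_nonneg_right (mul_le_mul ha ha (abs_nonneg a) hr0.le) (abs_nonneg L1)
    have q2 : |a| * |b| * |L2| ≤ r * r * |L2| :=
      mul_le_mul_of_nonneg_right (mul_le_mul ha hb (abs_nonneg b) hr0.le) (abs_nonneg L2)
    nlinarith [q1, q2, h2, mul_nonneg (mul_nonneg hr0.le ht) (abs_nonneg L1),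
      mul_nonneg (mul_nonneg hr0.le ht) (abs_nonneg L2)]
  have e3 : |b * (t + r) * O| ≤ r * (t + r) * |O| := by
    rw [abs_mul, abs_mul, abs_of_pos htr]
    exact mul_le_mul_of_nonneg_right (mul_le_mul_of_nonneg_right hb htr.le) (abs_nonneg O)
  have habs : r * (t + r) * |a * p0 + r * pa|
      ≤ r * (t + r) * (|S| + |L1| + |L2| + |O|) := by
    have h1 : r * (t + r) * |a * p0 + r * pa| = |r * (t + r) * (a * p0 + r * pa)| := by
      rw [abs_mul, abs_mul, abs_of_pos hr0, abs_of_pos htr]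
    rw [h1, key]
    have h2 := abs_add_le (a * r * S + a * (a * L1 + b * L2)) (b * (t + r) * O)
    have h3 := abs_add_le (a * r * S) (a * (a * L1 + b * L2))
    nlinarith [e1, e2, e3]
  have h3 : |a * p0 + r * pa| ≤ |S| + |L1| + |L2| + |O| :=
    le_of_mul_le_mul_left habs (by positivity)
  have h4 : a / r * p0 + pa = (a * p0 + r * pa) / r := by field_simp
  calc |a / r * p0 + pa| = |a * p0 + r * pa| / r := by
        rw [h4, abs_div, abs_of_pos hr0]
    _ ≤ (|S| + |L1| + |L2| + |O|) / r := by gcongr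
    _ = 1 / r * (|S| + |L1| + |L2| + |O|) := by ring

private lemma good2 {u : (Fin 3 → ℝ) → ℝ} {X : Fin 3 → ℝ} (hu : ContDiffAt ℝ 2 u X)
    (ht : 0 ≤ X 0) (hr : 1 ≤ rad X) (i : Fin 3) (hi : i = 1 ∨ i = 2) (ν : Fin 3) :
    |X i / rad X * pd 0 (pd ν u) X + pd i (pd ν u) X| ≤
      1 / rad X * (absPdGam u X + 6 * absPd u X) := by
  have hr2 : rad X ^ 2 = X 1 ^ 2 + X 2 ^ 2 := by
    unfold rad; exact Real.sq_sqrt (by positivity)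
  have h3 := bound_gamma3 hu ν
  have h4 := bound_gamma4 hu ν
  have h5 := bound_gamma5 hu ν
  have h6 := bound_gamma6 hu ν
  have hv : |pd ν u X| ≤ absPd u X := abs_pd_le u X ν
  have hsum : absPd (_root_.Gamma 3 u) X + absPd (_root_.Gamma 4 u) X + absPd (_root_.Gamma 5 u) X
      + absPd (_root_.Gamma 6 u) X ≤ absPdGam u X := by
    unfold absPdGam
    rw [Fin.sum_univ_seven]
    have n0 := absPd_nonneg (_root_.Gamma 0 u) X
    have n1 := absPd_nonneg (_root_.Gamma 1 u) X
    have n2 := absPd_nonneg (_root_.Gamma 2 u) X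
    linarith
  have hG3v : _root_.Gamma 3 (pd ν u) X
      = -(X 2) * pd 1 (pd ν u) X + X 1 * pd 2 (pd ν u) X := by simp [_root_.Gamma]
  have hG4v : _root_.Gamma 4 (pd ν u) X
      = X 0 * pd 1 (pd ν u) X + X 1 * pd 0 (pd ν u) X := by simp [_root_.Gamma]
  have hG5v : _root_.Gamma 5 (pd ν u) X
      = X 0 * pd 2 (pd ν u) X + X 2 * pd 0 (pd ν u) X := by simp [_root_.Gamma]
  have hG6v : _root_.Gamma 6 (pd ν u) X
      = X 0 * pd 0 (pd ν u) X + X 1 * pd 1 (pd ν u) X + X 2 * pd 2 (pd ν u) X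
        - 2 * pd ν u X := by simp [_root_.Gamma]
  have h1r0 : (0 : ℝ) ≤ 1 / rad X := by positivity
  have hbS : |X 0 * pd 0 (pd ν u) X + X 1 * pd 1 (pd ν u) X + X 2 * pd 2 (pd ν u) X|
      ≤ absPd (_root_.Gamma 6 u) X + 3 * absPd u X := by
    have e : X 0 * pd 0 (pd ν u) X + X 1 * pd 1 (pd ν u) X + X 2 * pd 2 (pd ν u) X
        = _root_.Gamma 6 (pd ν u) X + 2 * pd ν u X := by rw [hG6v]; ring
    rw [e]
    have := abs_add_le (_root_.Gamma 6 (pd ν u) X) (2 * pd ν u X)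
    rw [abs_mul] at this
    have h2 : |(2 : ℝ)| = 2 := by norm_num
    rw [h2] at this
    linarith
  have hb4 : |X 0 * pd 1 (pd ν u) X + X 1 * pd 0 (pd ν u) X|
      ≤ absPd (_root_.Gamma 4 u) X + absPd u X := by rw [← hG4v]; exact h4
  have hb5 : |X 0 * pd 2 (pd ν u) X + X 2 * pd 0 (pd ν u) X|
      ≤ absPd (_root_.Gamma 5 u) X + absPd u X := by rw [← hG5v]; exact h5
  rcases hi with rfl | rfl
  · have key := alg_good (t := X 0) (r := rad X) (a := X 1) (b := X 2)
      (p0 := pd 0 (pd ν u) X) (pa := pd 1 (pd ν u) X) (pb := pd 2 (pd ν u) X) ht hr hr2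
    refine key.trans ?_
    have hb3 : |X 2 * pd 1 (pd ν u) X - X 1 * pd 2 (pd ν u) X|
        ≤ absPd (_root_.Gamma 3 u) X + absPd u X := by
      have e : X 2 * pd 1 (pd ν u) X - X 1 * pd 2 (pd ν u) X = -(_root_.Gamma 3 (pd ν u) X) := by
        rw [hG3v]; ring
      rw [e, abs_neg]; exact h3
    apply mul_le_mul_of_nonneg_left _ h1r0
    linarith
  · have hr2' : rad X ^ 2 = X 2 ^ 2 + X 1 ^ 2 := by linarith
    have key := alg_good (t := X 0) (r := rad X) (a := X 2) (b := X 1)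
      (p0 := pd 0 (pd ν u) X) (pa := pd 2 (pd ν u) X) (pb := pd 1 (pd ν u) X) ht hr hr2'
    refine key.trans ?_
    have hbS' : |X 0 * pd 0 (pd ν u) X + X 2 * pd 2 (pd ν u) X + X 1 * pd 1 (pd ν u) X|
        ≤ absPd (_root_.Gamma 6 u) X + 3 * absPd u X := by
      have e : X 0 * pd 0 (pd ν u) X + X 2 * pd 2 (pd ν u) X + X 1 * pd 1 (pd ν u) X
          = X 0 * pd 0 (pd ν u) X + X 1 * pd 1 (pd ν u) X + X 2 * pd 2 (pd ν u) X := by ring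
      rw [e]; exact hbS
    have hb3 : |X 1 * pd 2 (pd ν u) X - X 2 * pd 1 (pd ν u) X|
        ≤ absPd (_root_.Gamma 3 u) X + absPd u X := by
      have e : X 1 * pd 2 (pd ν u) X - X 2 * pd 1 (pd ν u) X = _root_.Gamma 3 (pd ν u) X := by
        rw [hG3v]; ring
      rw [e]; exact h3
    apply mul_le_mul_of_nonneg_left _ h1r0
    linarith

private lemma mul4_le {x1 x2 x3 x4 y2 y3 y4 : ℝ}
    (h2 : |x2| ≤ y2) (h3 : |x3| ≤ y3) (h4 : |x4| ≤ y4) :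
    |x1 * x2 * x3 * x4| ≤ |x1| * (y2 * y3 * y4) := by
  have b2 := (abs_nonneg x2).trans h2
  have b3 := (abs_nonneg x3).trans h3
  have m1 : |x1| * |x2| ≤ |x1| * y2 := mul_le_mul_of_nonneg_left h2 (abs_nonneg x1)
  have m2 : |x1| * |x2| * |x3| ≤ |x1| * y2 * y3 :=
    mul_le_mul m1 h3 (abs_nonneg x3) (mul_nonneg (abs_nonneg x1) b2)
  have m3 : |x1| * |x2| * |x3| * |x4| ≤ |x1| * y2 * y3 * y4 :=
    mul_le_mul m2 h4 (abs_nonneg x4) (mul_nonneg (mul_nonneg (abs_nonneg x1) b2) b3)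
  calc |x1 * x2 * x3 * x4| = |x1| * |x2| * |x3| * |x4| := by
        rw [abs_mul, abs_mul, abs_mul]
    _ ≤ |x1| * y2 * y3 * y4 := m3
    _ = |x1| * (y2 * y3 * y4) := by ring

private lemma abs_sum4_le {f B : Fin 3 → Fin 3 → Fin 3 → Fin 3 → ℝ}
    (h : ∀ α β μ ν, |f α β μ ν| ≤ B α β μ ν) :
    |∑ α : Fin 3, ∑ β : Fin 3, ∑ μ : Fin 3, ∑ ν : Fin 3, f α β μ ν| ≤
      ∑ α : Fin 3, ∑ β : Fin 3, ∑ μ : Fin 3, ∑ ν : Fin 3, B α β μ ν := by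
  refine (Finset.abs_sum_le_sum_abs _ _).trans (Finset.sum_le_sum fun α _ => ?_)
  refine (Finset.abs_sum_le_sum_abs _ _).trans (Finset.sum_le_sum fun β _ => ?_)
  refine (Finset.abs_sum_le_sum_abs _ _).trans (Finset.sum_le_sum fun μ _ => ?_)
  exact (Finset.abs_sum_le_sum_abs _ _).trans (Finset.sum_le_sum fun ν _ => h α β μ ν)

end Aux


set_option maxHeartbeats 2000000


/-- Lemma 3.2, bound for `F₁`: under the symmetry and null conditions,
for `|x| ≥ 1`, `F₁(u) = ∑ N_{αβμν} ∂_αΓ^a u ∂_βΓ^a u ∂_μ∂_ν u` satisfies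
`|F₁(u)| ≲ ∑_{i=1,2} |(ω_i∂_t + ∂_i)Γ^a u| |∂Γ^a u| |∂²u|
  + (1/r) |∂_tΓ^a u|² (|∂Γu| + |∂u|)`. -/
theorem F1_pointwise_bound
    (N : Fin 3 → Fin 3 → Fin 3 → Fin 3 → ℝ) (hsym : SymCond N) (hnull : NullCond N) :
    ∃ C : ℝ, 0 < C ∧
      ∀ (a : Fin 7 → ℕ) (u : (Fin 3 → ℝ) → ℝ) (s : Set (Fin 3 → ℝ)), IsOpen s →
        ContDiffOn ℝ (((∑ i, a i) + 3 : ℕ) : ℕ∞) u s →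
        ∀ X ∈ s, 0 ≤ X 0 → 1 ≤ rad X →
          |∑ α : Fin 3, ∑ β : Fin 3, ∑ μ : Fin 3, ∑ ν : Fin 3,
              N α β μ ν * pd α (GammaPow a u) X * pd β (GammaPow a u) X *
                pd μ (pd ν u) X| ≤
            C * ((|X 1 / rad X * pd 0 (GammaPow a u) X + pd 1 (GammaPow a u) X| +
                  |X 2 / rad X * pd 0 (GammaPow a u) X + pd 2 (GammaPow a u) X|) *
                    absPd (GammaPow a u) X * absPd2 u X +
                1 / rad X * (pd 0 (GammaPow a u) X) ^ 2 *
                  (absPdGam u X + absPd u X)) := by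
  classical
  set CN := ∑ α : Fin 3, ∑ β : Fin 3, ∑ μ : Fin 3, ∑ ν : Fin 3, |N α β μ ν| with hCNdef
  have hCN0 : 0 ≤ CN := by
    rw [hCNdef]
    exact Finset.sum_nonneg fun α _ => Finset.sum_nonneg fun β _ =>
      Finset.sum_nonneg fun μ _ => Finset.sum_nonneg fun ν _ => abs_nonneg _
  refine ⟨200 * CN + 1, by linarith, ?_⟩
  intro a u s hs hcd X hX ht hr
  have hu2 : ContDiffAt ℝ 2 u X := by
    have h := hcd.contDiffAt (hs.mem_nhds hX)
    refine h.of_le ?_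
    norm_cast
    exact_mod_cast (by omega : (2 : ℕ) ≤ (∑ i, a i) + 3)
  set w := GammaPow a u with hwdef
  have hr0 : (0 : ℝ) < rad X := lt_of_lt_of_le one_pos hr
  have hr2 : rad X ^ 2 = X 1 ^ 2 + X 2 ^ 2 := by
    unfold rad; exact Real.sq_sqrt (by positivity)
  have hcoord : ∀ α : Fin 3, α ≠ 0 → |X α| ≤ rad X := by
    intro α hα
    have h1 : |X 1| ≤ rad X := by
      rw [← Real.sqrt_sq_eq_abs]
      unfold rad
      exact Real.sqrt_le_sqrt (by nlinarith [sq_nonneg (X 2)])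
    have h2 : |X 2| ≤ rad X := by
      rw [← Real.sqrt_sq_eq_abs]
      unfold rad
      exact Real.sqrt_le_sqrt (by nlinarith [sq_nonneg (X 1)])
    fin_cases α
    · exact absurd rfl hα
    · exact h1
    · exact h2
  set η : Fin 3 → ℝ := fun α => if α = 0 then 1 else -(X α / rad X) with hηdef
  set g : Fin 3 → ℝ := fun α => pd α w X - η α * pd 0 w X with hgdef
  have hη0 : η 0 = 1 := by rw [hηdef]; norm_num
  have hη1 : η 1 = -(X 1 / rad X) := by rw [hηdef]; norm_num
  have hη2 : η 2 = -(X 2 / rad X) := by rw [hηdef]; simp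
  have hg1e : X 1 / rad X * pd 0 w X + pd 1 w X = g 1 := by
    rw [hgdef]; simp only [hη1]; ring
  have hg2e : X 2 / rad X * pd 0 w X + pd 2 w X = g 2 := by
    rw [hgdef]; simp only [hη2]; ring
  have hηle : ∀ α : Fin 3, |η α| ≤ 1 := by
    intro α
    by_cases hα : α = 0
    · rw [hα, hη0]; norm_num
    · have : η α = -(X α / rad X) := by rw [hηdef]; simp [hα]
      rw [this, abs_neg, abs_div, abs_of_pos hr0, div_le_one hr0]
      exact hcoord α hα
  have hg0 : g 0 = 0 := by rw [hgdef]; simp only [hη0]; ring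
  have hgle : ∀ α : Fin 3, |g α| ≤ |g 1| + |g 2| := by
    intro α
    fin_cases α
    · show |g 0| ≤ _
      rw [hg0, abs_zero]
      exact add_nonneg (abs_nonneg _) (abs_nonneg _)
    · exact le_add_of_nonneg_right (abs_nonneg _)
    · exact le_add_of_nonneg_left (abs_nonneg _)
  have hηnull : η 0 ^ 2 = η 1 ^ 2 + η 2 ^ 2 := by
    rw [hη0, hη1, hη2]
    field_simp
    linarith [hr2]
  set c00 := pd 0 (pd 0 u) X with hc00def
  set Q : Fin 3 → Fin 3 → ℝ := fun μ ν => pd μ (pd ν u) X - η μ * pd 0 (pd ν u) X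
    with hQdef
  set R : Fin 3 → ℝ := fun ν => pd 0 (pd ν u) X - η ν * c00 with hRdef
  have hP : ∀ μ ν : Fin 3, pd μ (pd ν u) X = Q μ ν + η μ * (R ν + η ν * c00) := by
    intro μ ν; simp only [hQdef, hRdef]; ring
  have hQb : ∀ μ ν : Fin 3,
      |Q μ ν| ≤ 1 / rad X * (absPdGam u X + 6 * absPd u X) := by
    intro μ ν
    have hEnn : 0 ≤ 1 / rad X * (absPdGam u X + 6 * absPd u X) := by
      apply mul_nonneg (by positivity)
      linarith [absPdGam_nonneg u X, absPd_nonneg u X]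
    fin_cases μ
    · show |Q 0 ν| ≤ _
      have : Q 0 ν = 0 := by simp only [hQdef, hη0]; ring
      rw [this, abs_zero]; exact hEnn
    · show |Q 1 ν| ≤ _
      have e : Q 1 ν = X 1 / rad X * pd 0 (pd ν u) X + pd 1 (pd ν u) X := by
        simp only [hQdef, hη1]; ring
      rw [e]; exact good2 hu2 ht hr 1 (Or.inl rfl) ν
    · show |Q 2 ν| ≤ _
      have e : Q 2 ν = X 2 / rad X * pd 0 (pd ν u) X + pd 2 (pd ν u) X := by
        simp only [hQdef, hη2]; ring
      rw [e]; exact good2 hu2 ht hr 2 (Or.inr rfl) ν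
  have hRb : ∀ ν : Fin 3,
      |R ν| ≤ 1 / rad X * (absPdGam u X + 6 * absPd u X) := by
    intro ν
    have hEnn : 0 ≤ 1 / rad X * (absPdGam u X + 6 * absPd u X) := by
      apply mul_nonneg (by positivity)
      linarith [absPdGam_nonneg u X, absPd_nonneg u X]
    fin_cases ν
    · show |R 0| ≤ _
      have : R 0 = 0 := by simp only [hRdef, hη0, hc00def]; ring
      rw [this, abs_zero]; exact hEnn
    · show |R 1| ≤ _
      have e : R 1 = X 1 / rad X * pd 0 (pd 0 u) X + pd 1 (pd 0 u) X := by
        simp only [hRdef, hη1, hc00def]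
        rw [pd_comm hu2 0 1]; ring
      rw [e]; exact good2 hu2 ht hr 1 (Or.inl rfl) 0
    · show |R 2| ≤ _
      have e : R 2 = X 2 / rad X * pd 0 (pd 0 u) X + pd 2 (pd 0 u) X := by
        simp only [hRdef, hη2, hc00def]
        rw [pd_comm hu2 0 2]; ring
      rw [e]; exact good2 hu2 ht hr 2 (Or.inr rfl) 0
  have hηR : ∀ μ ν : Fin 3,
      |η μ * R ν| ≤ 1 / rad X * (absPdGam u X + 6 * absPd u X) := by
    intro μ ν
    rw [abs_mul]
    calc |η μ| * |R ν| ≤ 1 * (1 / rad X * (absPdGam u X + 6 * absPd u X)) :=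
          mul_le_mul (hηle μ) (hRb ν) (abs_nonneg _) one_pos.le
      _ = _ := one_mul _
  set S1 := ∑ α : Fin 3, ∑ β : Fin 3, ∑ μ : Fin 3, ∑ ν : Fin 3,
      N α β μ ν * g α * pd β w X * pd μ (pd ν u) X with hS1def
  set S2 := ∑ α : Fin 3, ∑ β : Fin 3, ∑ μ : Fin 3, ∑ ν : Fin 3,
      N α β μ ν * η α * g β * pd μ (pd ν u) X with hS2def
  set S3 := ∑ α : Fin 3, ∑ β : Fin 3, ∑ μ : Fin 3, ∑ ν : Fin 3,
      N α β μ ν * η α * η β * pd μ (pd ν u) X with hS3def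
  have key : ∀ α β μ ν : Fin 3,
      N α β μ ν * pd α w X * pd β w X * pd μ (pd ν u) X
        = N α β μ ν * g α * pd β w X * pd μ (pd ν u) X
          + pd 0 w X * (N α β μ ν * η α * g β * pd μ (pd ν u) X)
          + pd 0 w X ^ 2 * (N α β μ ν * η α * η β * pd μ (pd ν u) X) := by
    intro α β μ ν; simp only [hgdef]; ring
  have split : (∑ α : Fin 3, ∑ β : Fin 3, ∑ μ : Fin 3, ∑ ν : Fin 3,
      N α β μ ν * pd α w X * pd β w X * pd μ (pd ν u) X)
        = S1 + pd 0 w X * S2 + pd 0 w X ^ 2 * S3 := by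
    rw [hS1def, hS2def, hS3def]
    simp only [key, Finset.sum_add_distrib, ← Finset.mul_sum]
  have hsplit3 : S3 = (∑ α : Fin 3, ∑ β : Fin 3, ∑ μ : Fin 3, ∑ ν : Fin 3,
        N α β μ ν * η α * η β * Q μ ν)
      + (∑ α : Fin 3, ∑ β : Fin 3, ∑ μ : Fin 3, ∑ ν : Fin 3,
        N α β μ ν * η α * η β * (η μ * R ν)) := by
    have h0 : (∑ α : Fin 3, ∑ β : Fin 3, ∑ μ : Fin 3, ∑ ν : Fin 3,
        N α β μ ν * η α * η β * η μ * η ν) = 0 := hnull η hηnull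
    have key2 : ∀ α β μ ν : Fin 3,
        N α β μ ν * η α * η β * pd μ (pd ν u) X
          = N α β μ ν * η α * η β * Q μ ν + N α β μ ν * η α * η β * (η μ * R ν)
            + N α β μ ν * η α * η β * η μ * η ν * c00 := by
      intro α β μ ν; rw [hP μ ν]; ring
    rw [hS3def]
    simp only [key2, Finset.sum_add_distrib, ← Finset.sum_mul]
    rw [h0, zero_mul, add_zero]
  have hS1b : |S1| ≤ CN * ((|g 1| + |g 2|) * absPd w X * absPd2 u X) := by
    rw [hS1def]
    refine (abs_sum4_le fun α β μ ν =>
      mul4_le (hgle α) (abs_pd_le w X β) (abs_pd2_le u X μ ν)).trans (le_of_eq ?_)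
    rw [hCNdef]
    simp only [← Finset.sum_mul]
  have hS2b : |S2| ≤ CN * (1 * (|g 1| + |g 2|) * absPd2 u X) := by
    rw [hS2def]
    refine (abs_sum4_le fun α β μ ν =>
      mul4_le (hηle α) (hgle β) (abs_pd2_le u X μ ν)).trans (le_of_eq ?_)
    rw [hCNdef]
    simp only [← Finset.sum_mul]
  have hS3b : |S3| ≤ CN * (1 * 1 * (1 / rad X * (absPdGam u X + 6 * absPd u X)))
      + CN * (1 * 1 * (1 / rad X * (absPdGam u X + 6 * absPd u X))) := by
    rw [hsplit3]
    refine (abs_add_le _ _).trans (add_le_add ?_ ?_)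
    · refine (abs_sum4_le fun α β μ ν =>
        mul4_le (hηle α) (hηle β) (hQb μ ν)).trans (le_of_eq ?_)
      rw [hCNdef]
      simp only [← Finset.sum_mul]
    · refine (abs_sum4_le fun α β μ ν =>
        mul4_le (hηle α) (hηle β) (hηR μ ν)).trans (le_of_eq ?_)
      rw [hCNdef]
      simp only [← Finset.sum_mul]
  have hq0 : |pd 0 w X| ≤ absPd w X := abs_pd_le w X 0
  have hA0 : 0 ≤ absPd w X := absPd_nonneg w X
  have hB0 := absPd2_nonneg u X
  have hGm0 := absPdGam_nonneg u X
  have hAu0 := absPd_nonneg u X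
  have hG0 : 0 ≤ |g 1| + |g 2| := add_nonneg (abs_nonneg _) (abs_nonneg _)
  have h1r0 : (0 : ℝ) ≤ 1 / rad X := by positivity
  rw [hg1e, hg2e, split]
  calc |S1 + pd 0 w X * S2 + pd 0 w X ^ 2 * S3|
      ≤ |S1| + |pd 0 w X| * |S2| + pd 0 w X ^ 2 * |S3| := by
        have t1 := abs_add_le (S1 + pd 0 w X * S2) (pd 0 w X ^ 2 * S3)
        have t2 := abs_add_le S1 (pd 0 w X * S2)
        have e1 : |pd 0 w X * S2| = |pd 0 w X| * |S2| := abs_mul _ _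
        have e2 : |pd 0 w X ^ 2 * S3| = pd 0 w X ^ 2 * |S3| := by
          rw [abs_mul, abs_of_nonneg (sq_nonneg _)]
        linarith
    _ ≤ CN * ((|g 1| + |g 2|) * absPd w X * absPd2 u X)
        + absPd w X * (CN * (1 * (|g 1| + |g 2|) * absPd2 u X))
        + pd 0 w X ^ 2 * (CN * (1 * 1 * (1 / rad X * (absPdGam u X + 6 * absPd u X)))
            + CN * (1 * 1 * (1 / rad X * (absPdGam u X + 6 * absPd u X)))) := by
        refine add_le_add (add_le_add hS1b ?_) ?_
        · exact mul_le_mul hq0 hS2b (abs_nonneg _) hA0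
        · exact mul_le_mul_of_nonneg_left hS3b (sq_nonneg _)
    _ ≤ (200 * CN + 1) * ((|g 1| + |g 2|) * absPd w X * absPd2 u X
          + 1 / rad X * pd 0 w X ^ 2 * (absPdGam u X + absPd u X)) := by
        nlinarith [mul_nonneg (mul_nonneg (mul_nonneg hCN0 hG0) hA0) hB0,
          mul_nonneg (mul_nonneg hG0 hA0) hB0,
          mul_nonneg (mul_nonneg (mul_nonneg hCN0 h1r0) (sq_nonneg (pd 0 w X))) hGm0,
          mul_nonneg (mul_nonneg (mul_nonneg hCN0 h1r0) (sq_nonneg (pd 0 w X))) hAu0,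
          mul_nonneg (mul_nonneg h1r0 (sq_nonneg (pd 0 w X))) hGm0,
          mul_nonneg (mul_nonneg h1r0 (sq_nonneg (pd 0 w X))) hAu0]

end
end

section
/- Let N_{αβμν} (α,β,μ,ν∈{0,1,2}) be real coefficients satisfying the symmetry condition and the null condition. There exists a constant C>0, depending only on the coefficients, such that for every multi-index a, every sufficiently smooth (C^{|a|+4}) real-valued function u defined near a point (t,x)∈ℝ^{1+2} with t≥0 and |x|≥1, the quantity F₂(u) := Σ N_{αβμν} ∂_α Γ^a u · ∂_β Γ^a u · ∂_μ∂_ν∂_t u satisfies |F₂(u)(t,x)| ≤ C [ Σ_{i=1,2} |((ω_i∂_t+∂_i)Γ^a u)| · |∂Γ^a u| · |∂³u| + (1/|x|)·|∂_tΓ^a u|²·(|∂²Γu| + |∂²u|) ](t,x). -/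
noncomputable section

open MeasureTheory Real Set

/-- `|∂³u|` at a point: the Euclidean norm of all third-order space-time derivatives. -/
def absPd3 (u : (Fin 3 → ℝ) → ℝ) (X : Fin 3 → ℝ) : ℝ :=
  Real.sqrt (∑ i : Fin 3, ∑ j : Fin 3, ∑ l : Fin 3, (pd i (pd j (pd l u)) X) ^ 2)

/-- `|∂²Γu|` at a point: the sum over the seven fields `Γ'` of `|∂²Γ'u|`. -/
def absPd2Gam (u : (Fin 3 → ℝ) → ℝ) (X : Fin 3 → ℝ) : ℝ :=
  ∑ i : Fin 7, absPd2 (Gamma i u) X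

section F2Aux

variable {f w : (Fin 3 → ℝ) → ℝ} {Y : Fin 3 → ℝ}




lemma contDiffAt_pd {n : WithTop ℕ∞} (i : Fin 3) (hf : ContDiffAt ℝ (n+1) f Y) :
    ContDiffAt ℝ n (pd i f) Y :=
  (hf.fderiv_right le_rfl).clm_apply contDiffAt_const

lemma diffAt_pd (i : Fin 3) (hf : ContDiffAt ℝ 2 f Y) : DifferentiableAt ℝ (pd i f) Y := by
  have := contDiffAt_pd (n := 1) i (by exact_mod_cast hf)
  exact this.differentiableAt (by norm_num)

lemma pd_comm_s12 (hf : ContDiffAt ℝ 2 f Y) (i j : Fin 3) :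
    pd i (pd j f) Y = pd j (pd i f) Y := by
  have hsym := hf.isSymmSndFDerivAt (by simp)
  have key : ∀ k l : Fin 3, pd k (pd l f) Y
      = fderiv ℝ (fderiv ℝ f) Y (Pi.single k 1) (Pi.single l 1) := by
    intro k l
    have hdf : DifferentiableAt ℝ (fderiv ℝ f) Y :=
      (hf.fderiv_right (m := 1) (by norm_num)).differentiableAt (by norm_num)
    have : pd l f = fun Z => (fderiv ℝ f Z) ((fun _ => (Pi.single l 1 : Fin 3 → ℝ)) Z) := rfl
    rw [pd, this, fderiv_clm_apply hdf (differentiableAt_const _)]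
    simp
  rw [key i j, key j i, hsym]

lemma pd_fun_congr {s : Set (Fin 3 → ℝ)} {g : (Fin 3 → ℝ) → ℝ} {X : Fin 3 → ℝ}
    (hs : IsOpen s) (hX : X ∈ s) (h : ∀ Y ∈ s, f Y = g Y) (i : Fin 3) :
    pd i f X = pd i g X := by
  unfold pd
  rw [Filter.EventuallyEq.fderiv_eq (Filter.eventuallyEq_of_mem (hs.mem_nhds hX) h)]

lemma pd_master (i : Fin 3) {a b c d : (Fin 3 → ℝ) → ℝ} (r0 r1 r2 rc : ℝ)
    (ha : DifferentiableAt ℝ a Y) (hb : DifferentiableAt ℝ b Y)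
    (hc : DifferentiableAt ℝ c Y) (hd : DifferentiableAt ℝ d Y) :
    pd i (fun Z => r0 * (Z 0 * a Z) + r1 * (Z 1 * b Z) + r2 * (Z 2 * c Z) + rc * d Z) Y =
    r0 * ((Pi.single i 1 : Fin 3 → ℝ) 0 * a Y + Y 0 * pd i a Y) +
    r1 * ((Pi.single i 1 : Fin 3 → ℝ) 1 * b Y + Y 1 * pd i b Y) +
    r2 * ((Pi.single i 1 : Fin 3 → ℝ) 2 * c Y + Y 2 * pd i c Y) + rc * pd i d Y := by
  have hp : ∀ j : Fin 3, HasFDerivAt (fun Z : Fin 3 → ℝ => Z j)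
      (ContinuousLinearMap.proj (R := ℝ) (φ := fun _ : Fin 3 => ℝ) j) Y :=
    fun j => by exact hasFDerivAt_apply j Y
  have H0 := ((hp 0).mul ha.hasFDerivAt).const_mul r0
  have H1 := ((hp 1).mul hb.hasFDerivAt).const_mul r1
  have H2 := ((hp 2).mul hc.hasFDerivAt).const_mul r2
  have H3 := hd.hasFDerivAt.const_mul rc
  have H := ((H0.add H1).add H2).add H3
  unfold pd
  rw [(show HasFDerivAt (fun Z : Fin 3 → ℝ => r0 * (Z 0 * a Z) + r1 * (Z 1 * b Z) + r2 * (Z 2 * c Z) + rc * d Z) _ Y from H).fderiv]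
  simp only [ContinuousLinearMap.add_apply, ContinuousLinearMap.smul_apply,
    ContinuousLinearMap.proj_apply, smul_eq_mul]
  ring


lemma abs_le_sqrt_of_sq_le {x S : ℝ} (h : x^2 ≤ S) : |x| ≤ Real.sqrt S := by
  rw [← Real.sqrt_sq_eq_abs]; exact Real.sqrt_le_sqrt h


lemma entry2_le (w : (Fin 3 → ℝ) → ℝ) (X : Fin 3 → ℝ) (i j : Fin 3) :
    |pd i (pd j w) X| ≤ absPd2 w X := by
  apply abs_le_sqrt_of_sq_le
  calc (pd i (pd j w) X)^2 ≤ ∑ j' : Fin 3, (pd i (pd j' w) X)^2 :=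
        Finset.single_le_sum (f := fun j' => (pd i (pd j' w) X)^2)
          (fun k _ => sq_nonneg _) (Finset.mem_univ j)
    _ ≤ ∑ i' : Fin 3, ∑ j' : Fin 3, (pd i' (pd j' w) X)^2 :=
        Finset.single_le_sum (f := fun i' => ∑ j' : Fin 3, (pd i' (pd j' w) X)^2)
          (fun k _ => Finset.sum_nonneg fun _ _ => sq_nonneg _) (Finset.mem_univ i)

lemma entry3_le (w : (Fin 3 → ℝ) → ℝ) (X : Fin 3 → ℝ) (i j l : Fin 3) :
    |pd i (pd j (pd l w)) X| ≤ absPd3 w X := by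
  apply abs_le_sqrt_of_sq_le
  calc (pd i (pd j (pd l w)) X)^2 ≤ ∑ l' : Fin 3, (pd i (pd j (pd l' w)) X)^2 :=
        Finset.single_le_sum (f := fun l' => (pd i (pd j (pd l' w)) X)^2)
          (fun k _ => sq_nonneg _) (Finset.mem_univ l)
    _ ≤ ∑ j' : Fin 3, ∑ l' : Fin 3, (pd i (pd j' (pd l' w)) X)^2 :=
        Finset.single_le_sum (f := fun j' => ∑ l' : Fin 3, (pd i (pd j' (pd l' w)) X)^2)
          (fun k _ => Finset.sum_nonneg fun _ _ => sq_nonneg _) (Finset.mem_univ j)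
    _ ≤ ∑ i' : Fin 3, ∑ j' : Fin 3, ∑ l' : Fin 3, (pd i' (pd j' (pd l' w)) X)^2 :=
        Finset.single_le_sum
          (f := fun i' => ∑ j' : Fin 3, ∑ l' : Fin 3, (pd i' (pd j' (pd l' w)) X)^2)
          (fun k _ => Finset.sum_nonneg fun _ _ => Finset.sum_nonneg fun _ _ => sq_nonneg _)
          (Finset.mem_univ i)

lemma pd_lin2 {f1 f2 : (Fin 3 → ℝ) → ℝ} (i : Fin 3) (c1 c2 : ℝ)
    (h1 : DifferentiableAt ℝ f1 Y) (h2 : DifferentiableAt ℝ f2 Y) :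
    pd i (fun Z => c1 * f1 Z + c2 * f2 Z) Y = c1 * pd i f1 Y + c2 * pd i f2 Y := by
  unfold pd
  rw [(show HasFDerivAt (fun Z => c1 * f1 Z + c2 * f2 Z) _ Y from (h1.hasFDerivAt.const_mul c1).add (h2.hasFDerivAt.const_mul c2)).fderiv]
  simp

lemma abs_single_le (ν k : Fin 3) : |(Pi.single ν (1:ℝ) : Fin 3 → ℝ) k| ≤ 1 := by
  rw [Pi.single_apply]; split <;> simp

section Comm

variable {u : (Fin 3 → ℝ) → ℝ} {s : Set (Fin 3 → ℝ)} {X : Fin 3 → ℝ}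

lemma hd1s (hu : ∀ Y ∈ s, ContDiffAt ℝ 4 u Y) :
    ∀ Y ∈ s, ∀ k, DifferentiableAt ℝ (pd k u) Y := fun Y hY k =>
  (contDiffAt_pd (n := 3) k ((hu Y hY).of_le (by norm_num))).differentiableAt (by norm_num)

lemma hd2s (hu : ∀ Y ∈ s, ContDiffAt ℝ 4 u Y) :
    ∀ Y ∈ s, ∀ k l, DifferentiableAt ℝ (pd k (pd l u)) Y := fun Y hY k l =>
  (contDiffAt_pd (n := 2) k (contDiffAt_pd (n := 3) l
    ((hu Y hY).of_le (by norm_num)))).differentiableAt (by norm_num)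

lemma hd0s (hu : ∀ Y ∈ s, ContDiffAt ℝ 4 u Y) :
    ∀ Y ∈ s, DifferentiableAt ℝ u Y := fun Y hY =>
  (hu Y hY).differentiableAt (by norm_num)

lemma pd3_perm1 (hs : IsOpen s) (hu : ∀ Y ∈ s, ContDiffAt ℝ 4 u Y) (hX : X ∈ s)
    (a b c : Fin 3) : pd a (pd b (pd c u)) X = pd a (pd c (pd b u)) X :=
  pd_fun_congr hs hX (fun Y hY => pd_comm_s12 ((hu Y hY).of_le (by norm_num)) b c) a

lemma pd3_perm2 (hu : ∀ Y ∈ s, ContDiffAt ℝ 4 u Y) (hX : X ∈ s)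
    (a b c : Fin 3) : pd a (pd b (pd c u)) X = pd b (pd a (pd c u)) X :=
  pd_comm_s12 (contDiffAt_pd (n := 2) c ((hu X hX).of_le (by norm_num))) a b

/-- `pd k (pd ν (pd 0 u)) X = pd ν (pd 0 (pd k u)) X`. -/
lemma pd3_rot (hs : IsOpen s) (hu : ∀ Y ∈ s, ContDiffAt ℝ 4 u Y) (hX : X ∈ s)
    (k ν : Fin 3) : pd k (pd ν (pd 0 u)) X = pd ν (pd 0 (pd k u)) X := by
  rw [pd3_perm2 hu hX k ν 0, pd3_perm1 hs hu hX ν k 0]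

/-- Generic commutator bound for a first-order field with linear coefficients. -/
lemma comm_generic (hs : IsOpen s) (hu : ∀ Y ∈ s, ContDiffAt ℝ 4 u Y) (hX : X ∈ s)
    (j : Fin 7) (k0 k1 k2 : Fin 3) (r0 r1 r2 rc : ℝ)
    (hr0 : |r0| ≤ 2) (hr1 : |r1| ≤ 2) (hr2 : |r2| ≤ 2)
    (hj : ∀ (w : (Fin 3 → ℝ) → ℝ) (Z : Fin 3 → ℝ), Gamma j w Z =
      r0 * (Z 0 * pd k0 w Z) + r1 * (Z 1 * pd k1 w Z) + r2 * (Z 2 * pd k2 w Z) + rc * w Z)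
    (ν : Fin 3) :
    |Gamma j (pd ν (pd 0 u)) X| ≤ absPd2 (Gamma j u) X + 8 * absPd2 u X := by
  set A := pd 0 (pd k0 u) with hA
  set B := pd 0 (pd k1 u) with hB
  set C := pd 0 (pd k2 u) with hC
  set D : (Fin 3 → ℝ) → ℝ := fun Z => r0 * pd k0 u Z + rc * pd 0 u Z with hD
  have hg : Gamma j u = fun Z =>
      r0 * (Z 0 * pd k0 u Z) + r1 * (Z 1 * pd k1 u Z) + r2 * (Z 2 * pd k2 u Z) + rc * u Z :=
    funext (hj u)
  have st1 : ∀ Y ∈ s, pd 0 (Gamma j u) Y =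
      r0 * (Y 0 * A Y) + r1 * (Y 1 * B Y) + r2 * (Y 2 * C Y) + 1 * D Y := by
    intro Y hY
    rw [hg, pd_master 0 r0 r1 r2 rc (hd1s hu Y hY k0) (hd1s hu Y hY k1) (hd1s hu Y hY k2)
      (hd0s hu Y hY)]
    have e0 : (Pi.single (0 : Fin 3) 1 : Fin 3 → ℝ) 0 = 1 := by simp
    have e1 : (Pi.single (0 : Fin 3) 1 : Fin 3 → ℝ) 1 = 0 := by simp
    have e2 : (Pi.single (0 : Fin 3) 1 : Fin 3 → ℝ) 2 = 0 := by simp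
    rw [e0, e1, e2, hD, hA, hB, hC]
    ring
  have hDdiff : DifferentiableAt ℝ D X :=
    ((hd1s hu X hX k0).const_mul r0).add ((hd1s hu X hX 0).const_mul rc)
  have st2 : pd ν (pd 0 (Gamma j u)) X =
      r0 * ((Pi.single ν 1 : Fin 3 → ℝ) 0 * A X + X 0 * pd ν A X) +
      r1 * ((Pi.single ν 1 : Fin 3 → ℝ) 1 * B X + X 1 * pd ν B X) +
      r2 * ((Pi.single ν 1 : Fin 3 → ℝ) 2 * C X + X 2 * pd ν C X) +
      1 * (r0 * pd ν (pd k0 u) X + rc * pd ν (pd 0 u) X) := by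
    rw [pd_fun_congr hs hX st1 ν,
      pd_master ν r0 r1 r2 1 (hd2s hu X hX 0 k0) (hd2s hu X hX 0 k1) (hd2s hu X hX 0 k2) hDdiff,
      hD, pd_lin2 ν r0 rc (hd1s hu X hX k0) (hd1s hu X hX 0)]
  -- express Gamma j applied to the second derivative
  have key : Gamma j (pd ν (pd 0 u)) X = pd ν (pd 0 (Gamma j u)) X
      - r0 * ((Pi.single ν 1 : Fin 3 → ℝ) 0 * A X)
      - r1 * ((Pi.single ν 1 : Fin 3 → ℝ) 1 * B X)
      - r2 * ((Pi.single ν 1 : Fin 3 → ℝ) 2 * C X)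
      - r0 * pd ν (pd k0 u) X := by
    rw [hj (pd ν (pd 0 u)) X, st2,
      pd3_rot hs hu hX k0 ν, pd3_rot hs hu hX k1 ν, pd3_rot hs hu hX k2 ν, hA, hB, hC]
    ring
  rw [key]
  have b0 : |pd ν (pd 0 (Gamma j u)) X| ≤ absPd2 (Gamma j u) X := entry2_le _ _ ν 0
  have bA : |A X| ≤ absPd2 u X := entry2_le _ _ 0 k0
  have bB : |B X| ≤ absPd2 u X := entry2_le _ _ 0 k1
  have bC : |C X| ≤ absPd2 u X := entry2_le _ _ 0 k2
  have bD : |pd ν (pd k0 u) X| ≤ absPd2 u X := entry2_le _ _ ν k0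
  have s0 := abs_single_le ν 0
  have s1 := abs_single_le ν 1
  have s2 := abs_single_le ν 2
  have h2 : (0:ℝ) ≤ absPd2 u X := Real.sqrt_nonneg _
  have tri : ∀ a b c d e : ℝ, |a - b - c - d - e| ≤ |a| + |b| + |c| + |d| + |e| := by
    intro a b c d e
    calc |a - b - c - d - e| ≤ |a - b - c - d| + |e| := abs_sub _ _
      _ ≤ (|a - b - c| + |d|) + |e| := by gcongr; exact abs_sub _ _
      _ ≤ ((|a - b| + |c|) + |d|) + |e| := by gcongr; exact abs_sub _ _
      _ ≤ (((|a| + |b|) + |c|) + |d|) + |e| := by gcongr; exact abs_sub _ _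
  refine (tri _ _ _ _ _).trans ?_
  have m0 : |r0 * ((Pi.single ν 1 : Fin 3 → ℝ) 0 * A X)| ≤ 2 * absPd2 u X := by
    rw [abs_mul, abs_mul]
    calc |r0| * (|(Pi.single ν 1 : Fin 3 → ℝ) 0| * |A X|) ≤ 2 * (1 * absPd2 u X) := by
          apply mul_le_mul hr0 _ (by positivity) (by norm_num)
          exact mul_le_mul s0 bA (abs_nonneg _) (by norm_num)
      _ = 2 * absPd2 u X := by ring
  have m1 : |r1 * ((Pi.single ν 1 : Fin 3 → ℝ) 1 * B X)| ≤ 2 * absPd2 u X := by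
    rw [abs_mul, abs_mul]
    calc |r1| * (|(Pi.single ν 1 : Fin 3 → ℝ) 1| * |B X|) ≤ 2 * (1 * absPd2 u X) := by
          apply mul_le_mul hr1 _ (by positivity) (by norm_num)
          exact mul_le_mul s1 bB (abs_nonneg _) (by norm_num)
      _ = 2 * absPd2 u X := by ring
  have m2 : |r2 * ((Pi.single ν 1 : Fin 3 → ℝ) 2 * C X)| ≤ 2 * absPd2 u X := by
    rw [abs_mul, abs_mul]
    calc |r2| * (|(Pi.single ν 1 : Fin 3 → ℝ) 2| * |C X|) ≤ 2 * (1 * absPd2 u X) := by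
          apply mul_le_mul hr2 _ (by positivity) (by norm_num)
          exact mul_le_mul s2 bC (abs_nonneg _) (by norm_num)
      _ = 2 * absPd2 u X := by ring
  have m3 : |r0 * pd ν (pd k0 u) X| ≤ 2 * absPd2 u X := by
    rw [abs_mul]
    exact mul_le_mul hr0 bD (abs_nonneg _) (by norm_num)
  linarith

end Comm

set_option maxHeartbeats 1000000 in
lemma Tbound (t x1 x2 r p0 p1 p2 gX GA GB GC GD : ℝ)
    (ht : 0 ≤ t) (hr : 1 ≤ r) (hrsq : r^2 = x1^2 + x2^2)
    (hGA : GA = -x2*p1 + x1*p2) (hGB : GB = t*p1 + x1*p0) (hGC : GC = t*p2 + x2*p0)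
    (hGD : GD = t*p0 + x1*p1 + x2*p2 - 2*gX) :
    |x1/r*p0 + p1| ≤ (1/r)*(|GA| + |GB| + |GC| + |GD| + 2*|gX|) ∧
    |x2/r*p0 + p2| ≤ (1/r)*(|GA| + |GB| + |GC| + |GD| + 2*|gX|) := by
  have hr0 : (0:ℝ) < r := lt_of_lt_of_le one_pos hr
  have htr : (0:ℝ) < t + r := by linarith
  have hx1 : |x1| ≤ r := by
    rw [abs_le]; constructor <;> nlinarith [sq_nonneg x2, sq_nonneg (x1 - r), sq_nonneg (x1 + r)]
  have hx2 : |x2| ≤ r := by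
    rw [abs_le]; constructor <;> nlinarith [sq_nonneg x1, sq_nonneg (x2 - r), sq_nonneg (x2 + r)]
  set M : ℝ := |GA| + |GB| + |GC| + |GD| + 2*|gX| with hM
  have hM0 : 0 ≤ M := by positivity
  have key1 : r*(t+r)*(x1*p0 + r*p1) =
      x1*r*(GD + 2*gX) + x1*(x1*GB + x2*GC) + (-1) * ((t+r)*x2*GA) := by
    subst hGA hGB hGC hGD
    linear_combination ((t+r)*p1 + x1*p0) * hrsq
  have key2 : r*(t+r)*(x2*p0 + r*p2) =
      x2*r*(GD + 2*gX) + x2*(x1*GB + x2*GC) + 1 * ((t+r)*x1*GA) := by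
    subst hGA hGB hGC hGD
    linear_combination ((t+r)*p2 + x2*p0) * hrsq
  have habsGD : |GD + 2*gX| ≤ |GD| + 2*|gX| := by
    refine (abs_add_le _ _).trans ?_
    rw [abs_mul, abs_two]
  have comb : ∀ y1 y2 sgn : ℝ, |y1| ≤ r → |y2| ≤ r → (sgn = 1 ∨ sgn = -1) →
      |y1*r*(GD + 2*gX) + y1*(x1*GB + x2*GC) + sgn * ((t+r)*y2*GA)| ≤ r*(t+r)*M := by
    intro y1 y2 sgn hy1 hy2 hsgn
    have hs1 : |sgn| = 1 := by rcases hsgn with h | h <;> simp [h]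
    have t1 : |y1*r*(GD + 2*gX)| ≤ r * r * (|GD| + 2*|gX|) := by
      rw [abs_mul, abs_mul, abs_of_pos hr0]
      gcongr
    have t2 : |y1*(x1*GB + x2*GC)| ≤ r * (r*|GB| + r*|GC|) := by
      rw [abs_mul]
      have hin : |x1*GB + x2*GC| ≤ r*|GB| + r*|GC| := by
        refine (abs_add_le _ _).trans ?_
        rw [abs_mul, abs_mul]
        gcongr
      gcongr
    have t3 : |sgn * ((t+r)*y2*GA)| ≤ (t+r) * r * |GA| := by
      rw [abs_mul, hs1, one_mul, abs_mul, abs_mul, abs_of_pos htr]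
      gcongr
    have tri : |y1*r*(GD + 2*gX) + y1*(x1*GB + x2*GC) + sgn * ((t+r)*y2*GA)|
        ≤ |y1*r*(GD + 2*gX)| + |y1*(x1*GB + x2*GC)| + |sgn * ((t+r)*y2*GA)| :=
      (abs_add_le _ _).trans (by gcongr; exact abs_add_le _ _)
    have hrr : r * r * (|GD| + 2*|gX|) + r * (r*|GB| + r*|GC|) + (t+r) * r * |GA|
        ≤ r*(t+r)*M := by
      have expand : r*(t+r)*M - (r * r * (|GD| + 2*|gX|) + r * (r*|GB| + r*|GC|)
          + (t+r) * r * |GA|) = r*t*(|GB| + |GC| + |GD| + 2*|gX|) := by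
        rw [hM]; ring
      have pos : 0 ≤ r*t*(|GB| + |GC| + |GD| + 2*|gX|) := by positivity
      linarith
    linarith
  have final : ∀ y p GV : ℝ, |y| ≤ r →
      r*(t+r)*(y*p0 + r*p) = GV → |GV| ≤ r*(t+r)*M → |y/r*p0 + p| ≤ (1/r)*M := by
    intro y p GV hy hkey hGV
    have h1 : |y*p0 + r*p| ≤ M := by
      have h2 : r*(t+r)*|y*p0 + r*p| = |GV| := by
        rw [← abs_of_pos (mul_pos hr0 htr), ← abs_mul, hkey]
      have h3 : r*(t+r)*|y*p0 + r*p| ≤ r*(t+r)*M := by rw [h2]; exact hGV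
      exact le_of_mul_le_mul_left h3 (mul_pos hr0 htr)
    have h4 : y/r*p0 + p = (y*p0 + r*p)/r := by field_simp
    rw [h4, abs_div, abs_of_pos hr0]
    calc |y*p0 + r*p|/r ≤ M/r := by gcongr
      _ = (1/r)*M := by ring
  exact ⟨final x1 p1 _ hx1 key1 (comb x1 x2 (-1) hx1 hx2 (Or.inr rfl)),
    final x2 p2 _ hx2 key2 (comb x2 x1 1 hx2 hx1 (Or.inl rfl))⟩


lemma entry1_le (w : (Fin 3 → ℝ) → ℝ) (X : Fin 3 → ℝ) (α : Fin 3) :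
    |pd α w X| ≤ absPd w X := by
  apply abs_le_sqrt_of_sq_le
  unfold pdSq
  have hcase : α = 0 ∨ α = 1 ∨ α = 2 := by omega
  rcases hcase with h | h | h <;> subst h <;>
    nlinarith [sq_nonneg (pd 0 w X), sq_nonneg (pd 1 w X), sq_nonneg (pd 2 w X)]

section Main

variable {u : (Fin 3 → ℝ) → ℝ} {s : Set (Fin 3 → ℝ)} {X : Fin 3 → ℝ}

lemma comm3 (hs : IsOpen s) (hu : ∀ Y ∈ s, ContDiffAt ℝ 4 u Y) (hX : X ∈ s) (ν : Fin 3) :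
    |Gamma 3 (pd ν (pd 0 u)) X| ≤ absPd2 (Gamma 3 u) X + 8 * absPd2 u X :=
  comm_generic hs hu hX 3 0 2 1 0 1 (-1) 0 (by norm_num) (by norm_num) (by norm_num)
    (fun w Z => by show -(Z 2) * pd 1 w Z + Z 1 * pd 2 w Z = _; ring) ν

lemma comm4 (hs : IsOpen s) (hu : ∀ Y ∈ s, ContDiffAt ℝ 4 u Y) (hX : X ∈ s) (ν : Fin 3) :
    |Gamma 4 (pd ν (pd 0 u)) X| ≤ absPd2 (Gamma 4 u) X + 8 * absPd2 u X :=
  comm_generic hs hu hX 4 1 0 0 1 1 0 0 (by norm_num) (by norm_num) (by norm_num)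
    (fun w Z => by show Z 0 * pd 1 w Z + Z 1 * pd 0 w Z = _; ring) ν

lemma comm5 (hs : IsOpen s) (hu : ∀ Y ∈ s, ContDiffAt ℝ 4 u Y) (hX : X ∈ s) (ν : Fin 3) :
    |Gamma 5 (pd ν (pd 0 u)) X| ≤ absPd2 (Gamma 5 u) X + 8 * absPd2 u X :=
  comm_generic hs hu hX 5 2 0 0 1 0 1 0 (by norm_num) (by norm_num) (by norm_num)
    (fun w Z => by show Z 0 * pd 2 w Z + Z 2 * pd 0 w Z = _; ring) ν

lemma comm6 (hs : IsOpen s) (hu : ∀ Y ∈ s, ContDiffAt ℝ 4 u Y) (hX : X ∈ s) (ν : Fin 3) :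
    |Gamma 6 (pd ν (pd 0 u)) X| ≤ absPd2 (Gamma 6 u) X + 8 * absPd2 u X :=
  comm_generic hs hu hX 6 0 1 2 1 1 1 (-2) (by norm_num) (by norm_num) (by norm_num)
    (fun w Z => by
      show Z 0 * pd 0 w Z + Z 1 * pd 1 w Z + Z 2 * pd 2 w Z - 2 * w Z = _; ring) ν

lemma absPd2Gam_nonneg : 0 ≤ absPd2Gam u X :=
  Finset.sum_nonneg fun _ _ => Real.sqrt_nonneg _

lemma gam_le (j : Fin 7) : absPd2 (Gamma j u) X ≤ absPd2Gam u X :=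
  Finset.single_le_sum (f := fun i => absPd2 (Gamma i u) X)
    (fun _ _ => Real.sqrt_nonneg _) (Finset.mem_univ j)

lemma Tg_bound (hs : IsOpen s) (hu : ∀ Y ∈ s, ContDiffAt ℝ 4 u Y) (hX : X ∈ s)
    (ht : 0 ≤ X 0) (hrad : 1 ≤ rad X) (ν : Fin 3) :
    |X 1 / rad X * pd 0 (pd ν (pd 0 u)) X + pd 1 (pd ν (pd 0 u)) X|
      ≤ 34 / rad X * (absPd2Gam u X + absPd2 u X) ∧
    |X 2 / rad X * pd 0 (pd ν (pd 0 u)) X + pd 2 (pd ν (pd 0 u)) X|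
      ≤ 34 / rad X * (absPd2Gam u X + absPd2 u X) := by
  set g := pd ν (pd 0 u) with hgdef
  have hr0 : (0:ℝ) < rad X := lt_of_lt_of_le one_pos hrad
  have hrsq : (rad X)^2 = (X 1)^2 + (X 2)^2 := Real.sq_sqrt (by positivity)
  obtain ⟨h1, h2⟩ := Tbound (X 0) (X 1) (X 2) (rad X)
    (pd 0 g X) (pd 1 g X) (pd 2 g X) (g X)
    (Gamma 3 g X) (Gamma 4 g X) (Gamma 5 g X) (Gamma 6 g X) ht hrad hrsq
    (by show -(X 2) * pd 1 g X + X 1 * pd 2 g X = _; ring)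
    (by show X 0 * pd 1 g X + X 1 * pd 0 g X = _; ring)
    (by show X 0 * pd 2 g X + X 2 * pd 0 g X = _; ring)
    (by show X 0 * pd 0 g X + X 1 * pd 1 g X + X 2 * pd 2 g X - 2 * g X = _; ring)
  have b3 := (comm3 hs hu hX ν).trans (by linarith [gam_le (u := u) (X := X) 3] :
    absPd2 (Gamma 3 u) X + 8 * absPd2 u X ≤ absPd2Gam u X + 8 * absPd2 u X)
  have b4 := (comm4 hs hu hX ν).trans (by linarith [gam_le (u := u) (X := X) 4] :
    absPd2 (Gamma 4 u) X + 8 * absPd2 u X ≤ absPd2Gam u X + 8 * absPd2 u X)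
  have b5 := (comm5 hs hu hX ν).trans (by linarith [gam_le (u := u) (X := X) 5] :
    absPd2 (Gamma 5 u) X + 8 * absPd2 u X ≤ absPd2Gam u X + 8 * absPd2 u X)
  have b6 := (comm6 hs hu hX ν).trans (by linarith [gam_le (u := u) (X := X) 6] :
    absPd2 (Gamma 6 u) X + 8 * absPd2 u X ≤ absPd2Gam u X + 8 * absPd2 u X)
  have bg : |g X| ≤ absPd2 u X := entry2_le u X ν 0
  have hMle : |Gamma 3 g X| + |Gamma 4 g X| + |Gamma 5 g X| + |Gamma 6 g X| + 2*|g X|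
      ≤ 34 * (absPd2Gam u X + absPd2 u X) := by
    have := absPd2Gam_nonneg (u := u) (X := X)
    have : (0:ℝ) ≤ absPd2 u X := Real.sqrt_nonneg _
    linarith [absPd2Gam_nonneg (u := u) (X := X)]
  have hcast : (1 / rad X) * (|Gamma 3 g X| + |Gamma 4 g X| + |Gamma 5 g X| + |Gamma 6 g X|
      + 2*|g X|) ≤ 34 / rad X * (absPd2Gam u X + absPd2 u X) := by
    have h34 : 34 / rad X * (absPd2Gam u X + absPd2 u X)
        = (1 / rad X) * (34 * (absPd2Gam u X + absPd2 u X)) := by ring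
    rw [h34]
    gcongr
  exact ⟨h1.trans hcast, h2.trans hcast⟩

end Main

lemma term_bound (cα cβ cμ cν p0 pα pβ H K qα qβ R P Q D3 E : ℝ)
    (hpa : pα = cα*p0 + qα) (hpbd : pβ = cβ*p0 + qβ) (hH : H = cμ*cν*K + R)
    (hca : |cα| ≤ 1) (hcb : |cβ| ≤ 1)
    (hqa : |qα| ≤ Q) (hqb : |qβ| ≤ Q) (hpb : |pβ| ≤ P) (hp0 : |p0| ≤ P)
    (hH3 : |H| ≤ D3) (hR : |R| ≤ 2*E)
    (hQ : 0 ≤ Q) (hD : 0 ≤ D3) (hE : 0 ≤ E) :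
    |pα*pβ*H - cα*cβ*cμ*cν*(p0^2*K)| ≤ 2*(Q*P*D3) + 2*(p0^2*E) := by
  have hP : 0 ≤ P := le_trans (abs_nonneg p0) hp0
  have id : pα*pβ*H - cα*cβ*cμ*cν*(p0^2*K)
      = qα*(pβ*H) + (cα*p0)*(qβ*H) + (cα*cβ)*(p0^2*R) := by
    subst hpa hpbd hH; ring
  rw [id]
  have b1 : |qα*(pβ*H)| ≤ Q*(P*D3) := by
    rw [abs_mul, abs_mul]
    exact mul_le_mul hqa (mul_le_mul hpb hH3 (abs_nonneg _) hP) (by positivity) hQ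
  have b2 : |(cα*p0)*(qβ*H)| ≤ P*(Q*D3) := by
    rw [abs_mul, abs_mul, abs_mul]
    have h1 : |cα| * |p0| ≤ 1*P := mul_le_mul hca hp0 (abs_nonneg _) zero_le_one
    have h2 : |qβ| * |H| ≤ Q*D3 := mul_le_mul hqb hH3 (abs_nonneg _) hQ
    calc |cα| * |p0| * (|qβ| * |H|) ≤ 1*P * (Q*D3) :=
          mul_le_mul h1 h2 (by positivity) (by positivity)
      _ = P*(Q*D3) := by ring
  have b3 : |(cα*cβ)*(p0^2*R)| ≤ p0^2*(2*E) := by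
    rw [abs_mul (cα*cβ), abs_mul (p0^2), abs_of_nonneg (sq_nonneg p0)]
    have h1 : |cα*cβ| ≤ 1 := by
      rw [abs_mul]
      calc |cα| * |cβ| ≤ 1*1 := mul_le_mul hca hcb (abs_nonneg _) zero_le_one
        _ = 1 := by ring
    calc |cα*cβ| * (p0^2*|R|) ≤ 1 * (p0^2*(2*E)) := by
          apply mul_le_mul h1 _ (by positivity) zero_le_one
          exact mul_le_mul_of_nonneg_left hR (sq_nonneg _)
      _ = p0^2*(2*E) := by ring
  have tri : |qα*(pβ*H) + (cα*p0)*(qβ*H) + (cα*cβ)*(p0^2*R)|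
      ≤ |qα*(pβ*H)| + |(cα*p0)*(qβ*H)| + |(cα*cβ)*(p0^2*R)| :=
    (abs_add_le _ _).trans (by gcongr; exact abs_add_le _ _)
  have heq : Q*(P*D3) + P*(Q*D3) + p0^2*(2*E) = 2*(Q*P*D3) + 2*(p0^2*E) := by ring
  linarith





end F2Aux

set_option maxHeartbeats 1000000 in
/-- Lemma 3.2, bound for `F₂`: under the symmetry and null conditions,
for `|x| ≥ 1`, `F₂(u) = ∑ N_{αβμν} ∂_αΓ^a u ∂_βΓ^a u ∂_μ∂_ν∂_t u` satisfies
`|F₂(u)| ≲ ∑_{i=1,2} |(ω_i∂_t + ∂_i)Γ^a u| |∂Γ^a u| |∂³u|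
  + (1/r) |∂_tΓ^a u|² (|∂²Γu| + |∂²u|)`. -/
theorem F2_pointwise_bound
    (N : Fin 3 → Fin 3 → Fin 3 → Fin 3 → ℝ) (hsym : SymCond N) (hnull : NullCond N) :
    ∃ C : ℝ, 0 < C ∧
      ∀ (a : Fin 7 → ℕ) (u : (Fin 3 → ℝ) → ℝ) (s : Set (Fin 3 → ℝ)), IsOpen s →
        ContDiffOn ℝ (((∑ i, a i) + 4 : ℕ) : ℕ∞) u s →
        ∀ X ∈ s, 0 ≤ X 0 → 1 ≤ rad X →
          |∑ α : Fin 3, ∑ β : Fin 3, ∑ μ : Fin 3, ∑ ν : Fin 3,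
              N α β μ ν * pd α (GammaPow a u) X * pd β (GammaPow a u) X *
                pd μ (pd ν (pd 0 u)) X| ≤
            C * ((|X 1 / rad X * pd 0 (GammaPow a u) X + pd 1 (GammaPow a u) X| +
                  |X 2 / rad X * pd 0 (GammaPow a u) X + pd 2 (GammaPow a u) X|) *
                    absPd (GammaPow a u) X * absPd3 u X +
                1 / rad X * (pd 0 (GammaPow a u) X) ^ 2 *
                  (absPd2Gam u X + absPd2 u X)) := by
  have hCpos : (0:ℝ) < 68 * (∑ α : Fin 3, ∑ β : Fin 3, ∑ μ : Fin 3, ∑ ν : Fin 3,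
      |N α β μ ν|) + 1 := by
    have h : (0:ℝ) ≤ ∑ α : Fin 3, ∑ β : Fin 3, ∑ μ : Fin 3, ∑ ν : Fin 3, |N α β μ ν| :=
      Finset.sum_nonneg fun _ _ => Finset.sum_nonneg fun _ _ =>
        Finset.sum_nonneg fun _ _ => Finset.sum_nonneg fun _ _ => abs_nonneg _
    linarith
  refine ⟨68 * (∑ α : Fin 3, ∑ β : Fin 3, ∑ μ : Fin 3, ∑ ν : Fin 3, |N α β μ ν|) + 1,
    hCpos, ?_⟩
  intro a u s hs hu X hX ht hrad
  have hu4 : ∀ Y ∈ s, ContDiffAt ℝ 4 u Y := by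
    intro Y hY
    refine (hu.contDiffAt (hs.mem_nhds hY)).of_le ?_
    have h0 : (4 : WithTop ℕ∞) = ((4:ℕ∞) : WithTop ℕ∞) := rfl
    rw [h0]
    exact WithTop.coe_le_coe.mpr (by exact_mod_cast Nat.le_add_left 4 (∑ i, a i))
  have hr0 : (0:ℝ) < rad X := lt_of_lt_of_le one_pos hrad
  have hrsq : (rad X)^2 = (X 1)^2 + (X 2)^2 := Real.sq_sqrt (by positivity)
  set v := GammaPow a u with hv
  set c : Fin 3 → ℝ := ![1, -(X 1 / rad X), -(X 2 / rad X)] with hc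
  set qq : Fin 3 → ℝ := fun α => pd α v X - c α * pd 0 v X with hqq
  set K := pd 0 (pd 0 (pd 0 u)) X with hK
  -- coefficient facts
  have hc0 : c 0 = 1 := rfl
  have hc1 : c 1 = -(X 1 / rad X) := rfl
  have hc2 : c 2 = -(X 2 / rad X) := rfl
  have hx1 : |X 1| ≤ rad X := by
    rw [abs_le]
    constructor <;>
      nlinarith [sq_nonneg (X 2), sq_nonneg (X 1 - rad X), sq_nonneg (X 1 + rad X)]
  have hx2 : |X 2| ≤ rad X := by
    rw [abs_le]
    constructor <;>
      nlinarith [sq_nonneg (X 1), sq_nonneg (X 2 - rad X), sq_nonneg (X 2 + rad X)]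
  have hc_abs : ∀ α, |c α| ≤ 1 := by
    intro α
    have hcase : α = 0 ∨ α = 1 ∨ α = 2 := by omega
    rcases hcase with h | h | h <;> subst h
    · rw [hc0]; norm_num
    · rw [hc1, abs_neg, abs_div, abs_of_pos hr0, div_le_one hr0]; exact hx1
    · rw [hc2, abs_neg, abs_div, abs_of_pos hr0, div_le_one hr0]; exact hx2
  have hcnull : (c 0)^2 = (c 1)^2 + (c 2)^2 := by
    rw [hc0, hc1, hc2]
    have : (X 1 / rad X)^2 + (X 2 / rad X)^2 = 1 := by
      field_simp
      linarith [hrsq]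
    nlinarith [this]
  have hnullc : ∑ α : Fin 3, ∑ β : Fin 3, ∑ μ : Fin 3, ∑ ν : Fin 3,
      N α β μ ν * c α * c β * c μ * c ν = 0 := hnull c hcnull
  -- abbreviations for target quantities
  have hQnn : (0:ℝ) ≤ |X 1 / rad X * pd 0 v X + pd 1 v X| + |X 2 / rad X * pd 0 v X + pd 2 v X| :=
    add_nonneg (abs_nonneg _) (abs_nonneg _)
  have hPnn : (0:ℝ) ≤ absPd v X := Real.sqrt_nonneg _
  have hD3nn : (0:ℝ) ≤ absPd3 u X := Real.sqrt_nonneg _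
  have hGnn : (0:ℝ) ≤ absPd2Gam u X := absPd2Gam_nonneg
  have hAnn : (0:ℝ) ≤ absPd2 u X := Real.sqrt_nonneg _
  have hEnn : (0:ℝ) ≤ 34 / rad X * (absPd2Gam u X + absPd2 u X) :=
    mul_nonneg (div_nonneg (by norm_num) hr0.le) (add_nonneg hGnn hAnn)
  -- decomposition facts for first derivatives of v
  have hdecomp : ∀ α, pd α v X = c α * pd 0 v X + qq α := by
    intro α; rw [hqq]; ring
  have hq_abs : ∀ α, |qq α| ≤
      |X 1 / rad X * pd 0 v X + pd 1 v X| + |X 2 / rad X * pd 0 v X + pd 2 v X| := by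
    intro α
    have hcase : α = 0 ∨ α = 1 ∨ α = 2 := by omega
    rcases hcase with h | h | h <;> subst h
    · have : qq 0 = 0 := by rw [hqq]; simp [hc0]
      rw [this, abs_zero]; exact hQnn
    · have : qq 1 = X 1 / rad X * pd 0 v X + pd 1 v X := by rw [hqq]; simp [hc1]; ring
      rw [this]
      linarith [abs_nonneg (X 2 / rad X * pd 0 v X + pd 2 v X)]
    · have : qq 2 = X 2 / rad X * pd 0 v X + pd 2 v X := by rw [hqq]; simp [hc2]; ring
      rw [this]
      linarith [abs_nonneg (X 1 / rad X * pd 0 v X + pd 1 v X)]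
  -- the good-derivative bounds for second derivatives of u
  have hT := Tg_bound hs hu4 hX ht hrad
  -- bound |H μ ν - c μ c ν K| ≤ 2 E
  have hR0 : ∀ ν : Fin 3, |pd 0 (pd ν (pd 0 u)) X - c ν * K|
      ≤ 34 / rad X * (absPd2Gam u X + absPd2 u X) := by
    intro ν
    have hcase : ν = 0 ∨ ν = 1 ∨ ν = 2 := by omega
    rcases hcase with h | h | h <;> subst h
    · rw [hK, hc0]
      simp only [one_mul, sub_self, abs_zero]
      exact hEnn
    · have hperm : pd 0 (pd 1 (pd 0 u)) X = pd 1 (pd 0 (pd 0 u)) X := pd3_perm2 hu4 hX 0 1 0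
      have heq : pd 0 (pd 1 (pd 0 u)) X - c 1 * K
          = X 1 / rad X * pd 0 (pd 0 (pd 0 u)) X + pd 1 (pd 0 (pd 0 u)) X := by
        rw [hperm, hc1, hK]; ring
      rw [heq]
      exact (hT 0).1
    · have hperm : pd 0 (pd 2 (pd 0 u)) X = pd 2 (pd 0 (pd 0 u)) X := pd3_perm2 hu4 hX 0 2 0
      have heq : pd 0 (pd 2 (pd 0 u)) X - c 2 * K
          = X 2 / rad X * pd 0 (pd 0 (pd 0 u)) X + pd 2 (pd 0 (pd 0 u)) X := by
        rw [hperm, hc2, hK]; ring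
      rw [heq]
      exact (hT 0).2
  have hR : ∀ μ ν : Fin 3, |pd μ (pd ν (pd 0 u)) X - c μ * c ν * K|
      ≤ 2 * (34 / rad X * (absPd2Gam u X + absPd2 u X)) := by
    intro μ ν
    have hcase : μ = 0 ∨ μ = 1 ∨ μ = 2 := by omega
    rcases hcase with h | h | h <;> subst h
    · have heq : pd 0 (pd ν (pd 0 u)) X - c 0 * c ν * K
          = pd 0 (pd ν (pd 0 u)) X - c ν * K := by rw [hc0]; ring
      rw [heq]
      linarith [hR0 ν]
    · have heq : pd 1 (pd ν (pd 0 u)) X - c 1 * c ν * K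
          = (X 1 / rad X * pd 0 (pd ν (pd 0 u)) X + pd 1 (pd ν (pd 0 u)) X)
            + c 1 * (pd 0 (pd ν (pd 0 u)) X - c ν * K) := by
        rw [hc1]; ring
      rw [heq]
      refine (abs_add_le _ _).trans ?_
      have h1 := (hT ν).1
      have h2 : |c 1 * (pd 0 (pd ν (pd 0 u)) X - c ν * K)|
          ≤ 34 / rad X * (absPd2Gam u X + absPd2 u X) := by
        rw [abs_mul]
        calc |c 1| * |pd 0 (pd ν (pd 0 u)) X - c ν * K|
            ≤ 1 * (34 / rad X * (absPd2Gam u X + absPd2 u X)) :=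
              mul_le_mul (hc_abs 1) (hR0 ν) (abs_nonneg _) zero_le_one
          _ = _ := one_mul _
      linarith
    · have heq : pd 2 (pd ν (pd 0 u)) X - c 2 * c ν * K
          = (X 2 / rad X * pd 0 (pd ν (pd 0 u)) X + pd 2 (pd ν (pd 0 u)) X)
            + c 2 * (pd 0 (pd ν (pd 0 u)) X - c ν * K) := by
        rw [hc2]; ring
      rw [heq]
      refine (abs_add_le _ _).trans ?_
      have h1 := (hT ν).2
      have h2 : |c 2 * (pd 0 (pd ν (pd 0 u)) X - c ν * K)|
          ≤ 34 / rad X * (absPd2Gam u X + absPd2 u X) := by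
        rw [abs_mul]
        calc |c 2| * |pd 0 (pd ν (pd 0 u)) X - c ν * K|
            ≤ 1 * (34 / rad X * (absPd2Gam u X + absPd2 u X)) :=
              mul_le_mul (hc_abs 2) (hR0 ν) (abs_nonneg _) zero_le_one
          _ = _ := one_mul _
      linarith
  -- per-term bound
  have bound_each : ∀ α β μ ν : Fin 3,
      |N α β μ ν * pd α v X * pd β v X * pd μ (pd ν (pd 0 u)) X
        - N α β μ ν * c α * c β * c μ * c ν * ((pd 0 v X)^2 * K)|
      ≤ |N α β μ ν| * (2*((|X 1 / rad X * pd 0 v X + pd 1 v X| +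
            |X 2 / rad X * pd 0 v X + pd 2 v X|) * absPd v X * absPd3 u X)
          + 2*((pd 0 v X)^2 * (34 / rad X * (absPd2Gam u X + absPd2 u X)))) := by
    intro α β μ ν
    have eq1 : N α β μ ν * pd α v X * pd β v X * pd μ (pd ν (pd 0 u)) X
        - N α β μ ν * c α * c β * c μ * c ν * ((pd 0 v X)^2 * K)
        = N α β μ ν * (pd α v X * pd β v X * pd μ (pd ν (pd 0 u)) X
          - c α * c β * c μ * c ν * ((pd 0 v X)^2 * K)) := by ring
    rw [eq1, abs_mul]
    refine mul_le_mul_of_nonneg_left ?_ (abs_nonneg _)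
    exact term_bound (c α) (c β) (c μ) (c ν) (pd 0 v X) (pd α v X) (pd β v X)
      (pd μ (pd ν (pd 0 u)) X) K (qq α) (qq β)
      (pd μ (pd ν (pd 0 u)) X - c μ * c ν * K)
      _ _ _ _
      (hdecomp α) (hdecomp β) (by ring)
      (hc_abs α) (hc_abs β) (hq_abs α) (hq_abs β)
      (entry1_le v X β) (entry1_le v X 0)
      (entry3_le u X μ ν 0) (hR μ ν)
      hQnn hD3nn hEnn
  -- the null-condition cancellation
  have zero : ∑ α : Fin 3, ∑ β : Fin 3, ∑ μ : Fin 3, ∑ ν : Fin 3,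
      N α β μ ν * c α * c β * c μ * c ν * ((pd 0 v X)^2 * K) = 0 := by
    have h : ∑ α : Fin 3, ∑ β : Fin 3, ∑ μ : Fin 3, ∑ ν : Fin 3,
        N α β μ ν * c α * c β * c μ * c ν * ((pd 0 v X)^2 * K)
        = (∑ α : Fin 3, ∑ β : Fin 3, ∑ μ : Fin 3, ∑ ν : Fin 3,
            N α β μ ν * c α * c β * c μ * c ν) * ((pd 0 v X)^2 * K) := by
      simp only [Finset.sum_mul]
    rw [h, hnullc, zero_mul]
  have keysum : ∑ α : Fin 3, ∑ β : Fin 3, ∑ μ : Fin 3, ∑ ν : Fin 3,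
      N α β μ ν * pd α v X * pd β v X * pd μ (pd ν (pd 0 u)) X
      = ∑ α : Fin 3, ∑ β : Fin 3, ∑ μ : Fin 3, ∑ ν : Fin 3,
        (N α β μ ν * pd α v X * pd β v X * pd μ (pd ν (pd 0 u)) X
          - N α β μ ν * c α * c β * c μ * c ν * ((pd 0 v X)^2 * K)) := by
    have eqsub : ∑ α : Fin 3, ∑ β : Fin 3, ∑ μ : Fin 3, ∑ ν : Fin 3,
        (N α β μ ν * pd α v X * pd β v X * pd μ (pd ν (pd 0 u)) X
          - N α β μ ν * c α * c β * c μ * c ν * ((pd 0 v X)^2 * K))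
        = (∑ α : Fin 3, ∑ β : Fin 3, ∑ μ : Fin 3, ∑ ν : Fin 3,
            N α β μ ν * pd α v X * pd β v X * pd μ (pd ν (pd 0 u)) X)
          - ∑ α : Fin 3, ∑ β : Fin 3, ∑ μ : Fin 3, ∑ ν : Fin 3,
            N α β μ ν * c α * c β * c μ * c ν * ((pd 0 v X)^2 * K) := by
      simp only [Finset.sum_sub_distrib]
    rw [eqsub, zero, sub_zero]
  rw [keysum]
  have absle : |∑ α : Fin 3, ∑ β : Fin 3, ∑ μ : Fin 3, ∑ ν : Fin 3,
      (N α β μ ν * pd α v X * pd β v X * pd μ (pd ν (pd 0 u)) X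
        - N α β μ ν * c α * c β * c μ * c ν * ((pd 0 v X)^2 * K))|
      ≤ ∑ α : Fin 3, ∑ β : Fin 3, ∑ μ : Fin 3, ∑ ν : Fin 3,
        |N α β μ ν * pd α v X * pd β v X * pd μ (pd ν (pd 0 u)) X
          - N α β μ ν * c α * c β * c μ * c ν * ((pd 0 v X)^2 * K)| := by
    refine (Finset.abs_sum_le_sum_abs _ _).trans (Finset.sum_le_sum fun α _ => ?_)
    refine (Finset.abs_sum_le_sum_abs _ _).trans (Finset.sum_le_sum fun β _ => ?_)
    refine (Finset.abs_sum_le_sum_abs _ _).trans (Finset.sum_le_sum fun μ _ => ?_)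
    exact Finset.abs_sum_le_sum_abs _ _
  set B := 2*((|X 1 / rad X * pd 0 v X + pd 1 v X| +
      |X 2 / rad X * pd 0 v X + pd 2 v X|) * absPd v X * absPd3 u X)
      + 2*((pd 0 v X)^2 * (34 / rad X * (absPd2Gam u X + absPd2 u X))) with hB
  have sumle : ∑ α : Fin 3, ∑ β : Fin 3, ∑ μ : Fin 3, ∑ ν : Fin 3,
      |N α β μ ν * pd α v X * pd β v X * pd μ (pd ν (pd 0 u)) X
        - N α β μ ν * c α * c β * c μ * c ν * ((pd 0 v X)^2 * K)|
      ≤ ∑ α : Fin 3, ∑ β : Fin 3, ∑ μ : Fin 3, ∑ ν : Fin 3, |N α β μ ν| * B := by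
    refine Finset.sum_le_sum fun α _ => Finset.sum_le_sum fun β _ =>
      Finset.sum_le_sum fun μ _ => Finset.sum_le_sum fun ν _ => ?_
    exact bound_each α β μ ν
  have sumeq : ∑ α : Fin 3, ∑ β : Fin 3, ∑ μ : Fin 3, ∑ ν : Fin 3, |N α β μ ν| * B
      = (∑ α : Fin 3, ∑ β : Fin 3, ∑ μ : Fin 3, ∑ ν : Fin 3, |N α β μ ν|) * B := by
    simp only [Finset.sum_mul]
  have hCNnn : (0:ℝ) ≤ ∑ α : Fin 3, ∑ β : Fin 3, ∑ μ : Fin 3, ∑ ν : Fin 3, |N α β μ ν| :=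
    Finset.sum_nonneg fun _ _ => Finset.sum_nonneg fun _ _ =>
      Finset.sum_nonneg fun _ _ => Finset.sum_nonneg fun _ _ => abs_nonneg _
  have hT1nn : (0:ℝ) ≤ (|X 1 / rad X * pd 0 v X + pd 1 v X| +
      |X 2 / rad X * pd 0 v X + pd 2 v X|) * absPd v X * absPd3 u X :=
    mul_nonneg (mul_nonneg hQnn hPnn) hD3nn
  have hT2nn : (0:ℝ) ≤ 1 / rad X * (pd 0 v X)^2 * (absPd2Gam u X + absPd2 u X) :=
    mul_nonneg (mul_nonneg (div_nonneg zero_le_one hr0.le) (sq_nonneg _))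
      (add_nonneg hGnn hAnn)
  have final : (∑ α : Fin 3, ∑ β : Fin 3, ∑ μ : Fin 3, ∑ ν : Fin 3, |N α β μ ν|) * B
      ≤ (68 * (∑ α : Fin 3, ∑ β : Fin 3, ∑ μ : Fin 3, ∑ ν : Fin 3, |N α β μ ν|) + 1) *
        ((|X 1 / rad X * pd 0 v X + pd 1 v X| + |X 2 / rad X * pd 0 v X + pd 2 v X|) *
          absPd v X * absPd3 u X +
          1 / rad X * (pd 0 v X)^2 * (absPd2Gam u X + absPd2 u X)) := by
    set CN := ∑ α : Fin 3, ∑ β : Fin 3, ∑ μ : Fin 3, ∑ ν : Fin 3, |N α β μ ν| with hCN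
    set T1 := (|X 1 / rad X * pd 0 v X + pd 1 v X| +
      |X 2 / rad X * pd 0 v X + pd 2 v X|) * absPd v X * absPd3 u X with hT1
    set T2 := 1 / rad X * (pd 0 v X)^2 * (absPd2Gam u X + absPd2 u X) with hT2
    have hBeq : CN * B = 2*CN*T1 + 68*CN*T2 := by
      rw [hB, hT1, hT2]; ring
    have e1 : 0 ≤ CN*T1 := mul_nonneg hCNnn hT1nn
    have e2 : 0 ≤ CN*T2 := mul_nonneg hCNnn hT2nn
    nlinarith [hT1nn, hT2nn, e1, e2]
  calc |∑ α : Fin 3, ∑ β : Fin 3, ∑ μ : Fin 3, ∑ ν : Fin 3,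
      (N α β μ ν * pd α v X * pd β v X * pd μ (pd ν (pd 0 u)) X
        - N α β μ ν * c α * c β * c μ * c ν * ((pd 0 v X)^2 * K))|
      ≤ ∑ α : Fin 3, ∑ β : Fin 3, ∑ μ : Fin 3, ∑ ν : Fin 3, |N α β μ ν| * B :=
        absle.trans sumle
    _ = (∑ α : Fin 3, ∑ β : Fin 3, ∑ μ : Fin 3, ∑ ν : Fin 3, |N α β μ ν|) * B := sumeq
    _ ≤ _ := final

end
end
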